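/- arXiv:1611.02840 — 6 statements merged into one kernel-verified Lean document; each statement's English description precedes it below -/
import Mathlib

section
/- Let a : ℝ → ℝ be nondecreasing, locally Lipschitz and of linear growth (i.e. there is C > 0 with |a(x)| ≤ C(1+|x|) for all x). Let T > 0, let x₁ ≤ x₂ be real numbers, and let g₁, g₂ : [0,T] → ℝ be bounded measurable functions with g₁(t) ≤ g₂(t) for all t ∈ [0,T]. If y₁, y₂ : [0,T] → ℝ satisfy yᵢ(t) = xᵢ + ∫₀ᵗ a(yᵢ(s)) ds + gᵢ(t) for all t ∈ [0,T] (i = 1,2), then y₁(t) ≤ y₂(t) for all t ∈ [0,T]. -/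
open Set intervalIntegral MeasureTheory Filter Metric

/-- Iteration / Grönwall-type lemma. -/
lemma keyIter (v : ℝ → ℝ) (t K C B : ℝ) (ht : 0 ≤ t) (hK : 0 ≤ K) (hC : 0 < C)
    (hint : IntegrableOn v (Set.Ioc 0 t))
    (hbd : ∀ s ∈ Set.Icc (0:ℝ) t, v s ≤ B)
    (hineq : ∀ s ∈ Set.Icc (0:ℝ) t, v s ≤ K + C * ∫ r in Set.Ioc (0:ℝ) s, v r) :
    ∀ s ∈ Set.Icc (0:ℝ) t, v s ≤ K * Real.exp (C * s) := by
  have claim : ∀ n : ℕ, ∀ s ∈ Set.Icc (0:ℝ) t,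
      v s ≤ K * Real.exp (C * s) + B * (C * s) ^ n / n.factorial := by
    intro n
    induction n with
    | zero =>
      intro s hs
      have h1 : (0:ℝ) ≤ K * Real.exp (C * s) := by positivity
      simpa using (hbd s hs).trans (by nlinarith)
    | succ n ih =>
      intro s hs
      have hs0 : (0 : ℝ) ≤ s := hs.1
      have hsub : Set.Ioc (0:ℝ) s ⊆ Set.Ioc (0:ℝ) t := Set.Ioc_subset_Ioc_right hs.2
      have hmono : ∫ r in Set.Ioc (0:ℝ) s, v r ≤
          ∫ r in Set.Ioc (0:ℝ) s, (K * Real.exp (C * r) + B * (C * r) ^ n / n.factorial) := by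
        have c2 : Continuous fun r : ℝ => K * Real.exp (C * r) + B * (C * r) ^ n / n.factorial :=
          (continuous_const.mul (Real.continuous_exp.comp (continuous_const.mul continuous_id))).add
            ((continuous_const.mul ((continuous_const.mul continuous_id).pow n)).div_const _)
        apply setIntegral_mono_on (hint.mono_set hsub)
        · exact c2.integrableOn_Ioc
        · exact measurableSet_Ioc
        · intro r hr
          exact ih r ⟨le_of_lt hr.1, hr.2.trans hs.2⟩
      have hexp : ∫ r in (0:ℝ)..s, Real.exp (C * r) = (Real.exp (C * s) - 1) / C := by
        rw [intervalIntegral.integral_comp_mul_left Real.exp hC.ne']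
        simp [integral_exp, Real.exp_zero]
        ring
      have hpow : ∫ r in (0:ℝ)..s, (C * r) ^ n = C ^ n * (s ^ (n+1)) / (n+1) := by
        simp_rw [mul_pow]
        rw [intervalIntegral.integral_const_mul, integral_pow]
        push_cast
        ring
      have hcomp : ∫ r in Set.Ioc (0:ℝ) s, (K * Real.exp (C * r) + B * (C * r) ^ n / n.factorial)
          = K * ((Real.exp (C * s) - 1) / C) + (B / n.factorial) * (C ^ n * (s ^ (n+1)) / (n+1)) := by
        rw [← intervalIntegral.integral_of_le hs0]
        have i1 : IntervalIntegrable (fun r => K * Real.exp (C * r)) MeasureTheory.volume 0 s :=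
          (continuous_const.mul (Real.continuous_exp.comp (continuous_const.mul continuous_id))).intervalIntegrable _ _
        have i2 : IntervalIntegrable (fun r => (B / n.factorial) * (C * r) ^ n) MeasureTheory.volume 0 s :=
          (continuous_const.mul ((continuous_const.mul continuous_id).pow n)).intervalIntegrable _ _
        have hfun : (fun r : ℝ => K * Real.exp (C * r) + B * (C * r) ^ n / n.factorial)
            = fun r : ℝ => K * Real.exp (C * r) + (B / n.factorial) * (C * r) ^ n := by
          funext r; ring
        rw [hfun, intervalIntegral.integral_add i1 i2, intervalIntegral.integral_const_mul,
          intervalIntegral.integral_const_mul, hexp, hpow]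
      have key : v s ≤ K + C * ∫ r in Set.Ioc (0:ℝ) s,
          (K * Real.exp (C * r) + B * (C * r) ^ n / n.factorial) := by
        have h' := mul_le_mul_of_nonneg_left hmono hC.le
        have h'' := hineq s hs
        linarith
      rw [hcomp] at key
      have hfac : ((n+1).factorial : ℝ) = (n+1) * n.factorial := by
        rw [Nat.factorial_succ]; push_cast; ring
      have hne : (n.factorial : ℝ) ≠ 0 := by positivity
      have hne2 : ((n:ℝ)+1) ≠ 0 := by positivity
      calc v s ≤ K + (C * (K * ((Real.exp (C * s) - 1) / C) + (B / n.factorial) * (C ^ n * (s ^ (n+1)) / (n+1)))) := key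
        _ = K * Real.exp (C * s) + B * (C * s) ^ (n+1) / ((n+1).factorial) := by
            rw [hfac]; field_simp; ring
  intro s hs
  have hlim : Tendsto (fun n : ℕ => K * Real.exp (C * s) + B * (C * s) ^ n / n.factorial) atTop
      (nhds (K * Real.exp (C * s))) := by
    have h2 : Tendsto (fun n : ℕ => B * ((C * s) ^ n / n.factorial)) atTop (nhds (B * 0)) :=
      (FloorSemiring.tendsto_pow_div_factorial_atTop (C * s)).const_mul B
    simpa [mul_div_assoc] using tendsto_const_nhds.add h2
  exact ge_of_tendsto' hlim fun n => claim n s hs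

lemma lipOnIcc (a : ℝ → ℝ) (hl : LocallyLipschitz a) (R : ℝ) :
    ∃ L : ℝ, 0 ≤ L ∧ ∀ u ∈ Icc (-R) R, ∀ v ∈ Icc (-R) R, |a u - a v| ≤ L * |u - v| := by
  -- choose for each point a radius and constant
  have hch : ∀ p : ℝ, ∃ K : NNReal, ∃ ε : ℝ, 0 < ε ∧ LipschitzOnWith K a (ball p ε) := by
    intro p
    obtain ⟨K, t, ht, hK⟩ := hl p
    obtain ⟨ε, hε, hb⟩ := Metric.mem_nhds_iff.mp ht
    exact ⟨K, ε, hε, hK.mono hb⟩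
  choose Kf εf hεf hKf using hch
  -- compactness
  have hcov : Icc (-R) R ⊆ ⋃ p : ℝ, ball p (εf p / 2) := by
    intro q _
    exact mem_iUnion.mpr ⟨q, mem_ball_self (by linarith [hεf q])⟩
  obtain ⟨F, hF⟩ := isCompact_Icc.elim_finite_subcover (fun p : ℝ => ball p (εf p / 2))
    (fun p => isOpen_ball) hcov
  set L : ℝ := 1 + (F.sup Kf : NNReal) with hL
  have hL0 : 0 ≤ L := by positivity
  have hKle : ∀ p ∈ F, (Kf p : ℝ) ≤ L := by
    intro p hp
    have := Finset.le_sup (f := Kf) hp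
    have := NNReal.coe_le_coe.mpr this
    linarith
  -- one-sided claim
  have main : ∀ u ∈ Icc (-R) R, ∀ v ∈ Icc (-R) R, u ≤ v → |a v - a u| ≤ L * (v - u) := by
    intro u hu v hv huv
    set s : Set ℝ := {w | |a w - a u| ≤ L * (w - u)} with hs
    have hclosed : IsClosed (s ∩ Icc u v) := by
      apply IsClosed.inter _ isClosed_Icc
      have : s = (fun w => |a w - a u| - L * (w - u)) ⁻¹' (Iic 0) := by
        ext w; simp [hs, sub_nonpos]
      rw [this]
      exact IsClosed.preimage
        (((hl.continuous.sub continuous_const).abs).sub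
          (continuous_const.mul (continuous_id.sub continuous_const))) isClosed_Iic
    have husmem : u ∈ s := by simp [hs]
    have hsub : Icc u v ⊆ s := by
      apply hclosed.Icc_subset_of_forall_exists_gt husmem
      intro w hw z hz
      have hz' : w < z := hz
      have hwIcc : w ∈ Icc (-R) R := ⟨hu.1.trans hw.2.1, hw.2.2.le.trans hv.2⟩
      obtain ⟨p, hpF, hpball⟩ := mem_iUnion₂.mp (hF hwIcc)
      have hεp := hεf p
      set δ : ℝ := min (min (εf p / 2) (z - w)) (v - w) with hδ
      have hδpos : 0 < δ := by
        apply lt_min (lt_min (by linarith) (by linarith)) (by linarith [hw.2.2])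
      refine ⟨w + δ, ?_, by linarith, by
        have : δ ≤ z - w := (min_le_left _ _).trans (min_le_right _ _)
        linarith⟩
      have hwb : w ∈ ball p (εf p) := ball_subset_ball (by linarith) hpball
      have hw'b : w + δ ∈ ball p (εf p) := by
        rw [mem_ball, Real.dist_eq] at hpball ⊢
        have h1 : δ ≤ εf p / 2 := (min_le_left _ _).trans (min_le_left _ _)
        rw [abs_lt] at hpball ⊢
        constructor <;> [linarith; linarith]
      have hlip := (hKf p).dist_le_mul (w + δ) hw'b w hwb
      rw [Real.dist_eq, Real.dist_eq] at hlip
      have hKL : (Kf p : ℝ) ≤ L := hKle p hpF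
      have h2 : |a (w + δ) - a w| ≤ L * δ := by
        have : |w + δ - w| = δ := by rw [show w + δ - w = δ by ring, abs_of_pos hδpos]
        rw [this] at hlip
        exact hlip.trans (mul_le_mul_of_nonneg_right hKL hδpos.le)
      have h3 : |a w - a u| ≤ L * (w - u) := hw.1
      calc |a (w + δ) - a u| ≤ |a (w + δ) - a w| + |a w - a u| := abs_sub_le _ _ _
        _ ≤ L * δ + L * (w - u) := add_le_add h2 h3
        _ = L * (w + δ - u) := by ring
    have := hsub ⟨le_rfl, huv⟩ -- u? we need at v
    have hvs := hsub ⟨huv, le_rfl⟩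
    simpa [hs] using hvs
  refine ⟨L, hL0, ?_⟩
  intro u hu v hv
  rcases le_total u v with h | h
  · have := main u hu v hv h
    rw [abs_sub_comm] at this
    calc |a u - a v| ≤ L * (v - u) := this
      _ = L * |u - v| := by rw [abs_sub_comm, abs_of_nonneg (by linarith)]
  · have := main v hv u hu h
    calc |a u - a v| ≤ L * (u - v) := this
      _ = L * |u - v| := by rw [abs_of_nonneg (by linarith)]

lemma integrableAux (a : ℝ → ℝ) (hacont : Continuous a)
    (C : ℝ) (hC : 0 < C) (hgrow : ∀ z : ℝ, |a z| ≤ C * (1 + |z|))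
    (T : ℝ) (hT : 0 < T) (x : ℝ) (g y : ℝ → ℝ) (hgm : Measurable g)
    (M : ℝ) (hgb : ∀ t ∈ Icc (0:ℝ) T, |g t| ≤ M)
    (hy : ∀ t ∈ Icc (0:ℝ) T, y t = x + (∫ s in (0:ℝ)..t, a (y s)) + g t) :
    IntegrableOn (fun s => a (y s)) (Ioc 0 T) := by
  set f : ℝ → ℝ := fun s => a (y s) with hf
  have hM : 0 ≤ M := (abs_nonneg _).trans (hgb 0 ⟨le_rfl, hT.le⟩)
  set S : Set ℝ := {t | t ∈ Icc (0:ℝ) T ∧ IntegrableOn f (Ioc 0 t)} with hSdef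
  have h0S : (0:ℝ) ∈ S := ⟨⟨le_rfl, hT.le⟩, by simp [IntegrableOn]⟩
  have hdc : ∀ t ∈ S, ∀ s, 0 ≤ s → s ≤ t → s ∈ S := by
    intro t ht s hs0 hst
    exact ⟨⟨hs0, hst.trans ht.1.2⟩, ht.2.mono_set (Ioc_subset_Ioc_right hst)⟩
  -- Grönwall bound on the integral of |f|
  set K : ℝ := C * (1 + |x| + M) * T with hK
  have hKpos : 0 ≤ K := by positivity
  set U : ℝ := K * Real.exp (C * T) with hU
  have hUbound : ∀ t ∈ S, (∫ r in Ioc (0:ℝ) t, |f r|) ≤ U := by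
    intro t htS
    set v : ℝ → ℝ := fun s => ∫ r in Ioc (0:ℝ) s, |f r| with hv
    have habsint : IntegrableOn (fun r => |f r|) (Ioc 0 t) := htS.2.abs
    have habsicc : IntegrableOn (fun r => |f r|) (Icc 0 t) := by
      rwa [integrableOn_Icc_iff_integrableOn_Ioc]
    have hvcont : ContinuousOn v (Icc 0 t) := continuousOn_primitive habsicc
    have hvint : IntegrableOn v (Ioc 0 t) :=
      (hvcont.integrableOn_Icc).mono_set Ioc_subset_Icc_self
    have hvineq : ∀ s ∈ Icc (0:ℝ) t, v s ≤ K + C * ∫ r in Ioc (0:ℝ) s, v r := by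
      intro s hs
      have hsub : Ioc (0:ℝ) s ⊆ Ioc (0:ℝ) t := Ioc_subset_Ioc_right hs.2
      have hvints : IntegrableOn v (Ioc 0 s) := hvint.mono_set hsub
      have hptwise : ∀ r ∈ Ioc (0:ℝ) s, |f r| ≤ C * (1 + |x| + M) + C * v r := by
        intro r hr
        have hrIcc : r ∈ Icc (0:ℝ) T := ⟨hr.1.le, (hr.2.trans hs.2).trans htS.1.2⟩
        have hyr := hy r hrIcc
        have hint0r : |∫ u in (0:ℝ)..r, f u| ≤ v r := by
          rw [intervalIntegral.integral_of_le hr.1.le]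
          exact (norm_integral_le_integral_norm f).trans_eq (by simp [hv, Real.norm_eq_abs])
        have hybound : |y r| ≤ |x| + v r + M := by
          rw [hyr]
          calc |x + (∫ u in (0:ℝ)..r, f u) + g r| ≤ |x| + |∫ u in (0:ℝ)..r, f u| + |g r| := by
                exact (abs_add_le _ _).trans (add_le_add_left (abs_add_le _ _) _)
            _ ≤ |x| + v r + M := by
                exact add_le_add (add_le_add_right hint0r _) (hgb r hrIcc)
        calc |f r| ≤ C * (1 + |y r|) := hgrow (y r)
          _ ≤ C * (1 + (|x| + v r + M)) := by
              apply mul_le_mul_of_nonneg_left _ hC.le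
              linarith
          _ = C * (1 + |x| + M) + C * v r := by ring
      have hstep : v s ≤ ∫ r in Ioc (0:ℝ) s, (C * (1 + |x| + M) + C * v r) := by
        apply setIntegral_mono_on (habsint.mono_set hsub)
          ((integrableOn_const measure_Ioc_lt_top.ne).add (hvints.const_mul C))
          measurableSet_Ioc hptwise
      have hsplit : ∫ r in Ioc (0:ℝ) s, (C * (1 + |x| + M) + C * v r)
          = C * (1 + |x| + M) * s + C * ∫ r in Ioc (0:ℝ) s, v r := by
        rw [MeasureTheory.integral_add (integrableOn_const (μ := volume) (s := Ioc (0:ℝ) s) (C := C * (1 + |x| + M)) measure_Ioc_lt_top.ne) (hvints.const_mul C)]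
        rw [setIntegral_const, MeasureTheory.integral_const_mul, Real.volume_real_Ioc_of_le hs.1,
          smul_eq_mul]
        ring
      rw [hsplit] at hstep
      have : C * (1 + |x| + M) * s ≤ K := by
        rw [hK]
        have : s ≤ T := hs.2.trans htS.1.2
        nlinarith
      linarith
    have hvbd : ∀ s ∈ Icc (0:ℝ) t, v s ≤ v t := by
      intro s hs
      apply setIntegral_mono_set habsint
        (Eventually.of_forall fun r => abs_nonneg (f r))
        (HasSubset.Subset.eventuallyLE (Ioc_subset_Ioc_right hs.2))
    have := keyIter v t K C (v t) htS.1.1 hKpos hC hvint hvbd hvineq t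
      ⟨htS.1.1, le_rfl⟩
    calc v t ≤ K * Real.exp (C * t) := this
      _ ≤ U := by
        rw [hU]
        have := Real.exp_le_exp.mpr (mul_le_mul_of_nonneg_left htS.1.2 hC.le)
        nlinarith [Real.exp_pos (C * t)]
  -- pointwise bound for f on S
  set D : ℝ := C * (1 + |x| + M + U) with hD
  have hfboundS : ∀ s ∈ S, |f s| ≤ D := by
    intro s hsS
    have hvs := hUbound s hsS
    have hyr := hy s hsS.1
    have hint0s : |∫ u in (0:ℝ)..s, f u| ≤ U := by
      rw [intervalIntegral.integral_of_le hsS.1.1]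
      exact ((norm_integral_le_integral_norm f).trans_eq (by simp [Real.norm_eq_abs])).trans hvs
    have hybound : |y s| ≤ |x| + U + M := by
      rw [hyr]
      calc |x + (∫ u in (0:ℝ)..s, f u) + g s| ≤ |x| + |∫ u in (0:ℝ)..s, f u| + |g s| :=
            (abs_add_le _ _).trans (add_le_add_left (abs_add_le _ _) _)
        _ ≤ |x| + U + M := add_le_add (add_le_add_right hint0s _) (hgb s hsS.1)
    calc |f s| ≤ C * (1 + |y s|) := hgrow (y s)
      _ ≤ D := by rw [hD]; apply mul_le_mul_of_nonneg_left _ hC.le; linarith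
  -- the sup of S belongs to S
  have hSne : S.Nonempty := ⟨0, h0S⟩
  have hSbdd : BddAbove S := ⟨T, fun t ht => ht.1.2⟩
  set τ : ℝ := sSup S with hτ
  have hτIcc : τ ∈ Icc (0:ℝ) T := ⟨le_csSup hSbdd h0S, csSup_le hSne fun t ht => ht.1.2⟩
  have hτS : τ ∈ S := by
    obtain ⟨u, umono, utend, umem⟩ := exists_seq_tendsto_sSup hSne hSbdd
    refine ⟨hτIcc, ?_⟩
    rw [integrableOn_Ioc_iff_integrableOn_Ioo]
    have hooS : ∀ s ∈ Ioo (0:ℝ) τ, s ∈ S := by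
      intro s hs
      obtain ⟨n, hn⟩ := (utend.eventually (eventually_gt_nhds hs.2)).exists
      exact hdc (u n) (umem n) s hs.1.le hn.le
    have hEsub : Ioo (0:ℝ) τ ⊆ ⋃ n, Ioc (0:ℝ) (u n) := by
      intro s hs
      obtain ⟨n, hn⟩ := (utend.eventually (eventually_gt_nhds hs.2)).exists
      exact mem_iUnion.mpr ⟨n, hs.1, hn.le⟩
    have hmeasE : AEStronglyMeasurable f (volume.restrict (⋃ n, Ioc (0:ℝ) (u n))) :=
      aestronglyMeasurable_iUnion_iff.mpr fun n => (umem n).2.aestronglyMeasurable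
    have hmeas : AEStronglyMeasurable f (volume.restrict (Ioo (0:ℝ) τ)) :=
      hmeasE.mono_set hEsub
    apply Integrable.mono' (g := fun _ => D)
      (integrableOn_const measure_Ioo_lt_top.ne) hmeas
    rw [ae_restrict_iff' measurableSet_Ioo]
    exact Eventually.of_forall fun s hs => hfboundS s (hooS s hs)
  -- τ = T
  rcases eq_or_lt_of_le hτIcc.2 with heq | hlt
  · have := hτS.2; rwa [heq] at this
  · exfalso
    have hTnotS : ∀ s ∈ Ioc τ T, ¬ IntegrableOn f (Ioc 0 s) := by
      intro s hs hint
      have : s ∈ S := ⟨⟨hτIcc.1.trans hs.1.le, hs.2⟩, hint⟩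
      exact absurd (le_csSup hSbdd this) (not_le.mpr hs.1)
    have hyeq : ∀ s ∈ Ioc τ T, f s = a (x + g s) := by
      intro s hs
      have hs0 : (0:ℝ) ≤ s := hτIcc.1.trans hs.1.le
      have : ¬ IntervalIntegrable f volume 0 s := by
        rw [intervalIntegrable_iff_integrableOn_Ioc_of_le hs0]
        exact hTnotS s hs
      have hzero : (∫ u in (0:ℝ)..s, f u) = 0 := intervalIntegral.integral_undef this
      have := hy s ⟨hs0, hs.2⟩
      rw [hzero, add_zero] at this
      simp only [hf]
      rw [this]
    have hmodel : IntegrableOn (fun s => a (x + g s)) (Ioc τ T) := by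
      apply Integrable.mono' (g := fun _ => C * (1 + |x| + M))
        (integrableOn_const measure_Ioc_lt_top.ne)
        ((hacont.measurable.comp (measurable_const.add hgm)).aestronglyMeasurable)
      rw [ae_restrict_iff' measurableSet_Ioc]
      apply Eventually.of_forall
      intro s hs
      have hsIcc : s ∈ Icc (0:ℝ) T := ⟨hτIcc.1.trans hs.1.le, hs.2⟩
      have h1 : |x + g s| ≤ |x| + M := (abs_add_le x (g s)).trans (add_le_add_right (hgb s hsIcc) _)
      calc ‖a (x + g s)‖ = |a (x + g s)| := rfl
        _ ≤ C * (1 + |x + g s|) := hgrow _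
        _ ≤ C * (1 + |x| + M) := by nlinarith
    have hseg : IntegrableOn f (Ioc τ T) :=
      hmodel.congr_fun (fun s hs => (hyeq s hs).symm) measurableSet_Ioc |>.congr_fun
        (fun s hs => rfl) measurableSet_Ioc
    have hall : IntegrableOn f (Ioc 0 T) := by
      have := hτS.2.union hseg
      rwa [Ioc_union_Ioc_eq_Ioc hτIcc.1 hτIcc.2] at this
    have : T ∈ S := ⟨⟨hT.le, le_rfl⟩, hall⟩
    exact absurd (le_csSup hSbdd this) (not_le.mpr hlt)

/-- Comparison principle for perturbed integral equations
`y(t) = x + ∫₀ᵗ a(y(s)) ds + g(t)` with nondecreasing, locally Lipschitz drift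
of linear growth. -/
theorem stmt0 (a : ℝ → ℝ) (ha_mono : Monotone a) (ha_lip : LocallyLipschitz a)
    (C : ℝ) (hC : 0 < C) (ha_growth : ∀ x : ℝ, |a x| ≤ C * (1 + |x|))
    (T : ℝ) (hT : 0 < T)
    (x₁ x₂ : ℝ) (hx : x₁ ≤ x₂)
    (g₁ g₂ y₁ y₂ : ℝ → ℝ)
    (hg₁meas : Measurable g₁) (hg₂meas : Measurable g₂)
    (hg₁bdd : ∃ M : ℝ, ∀ t ∈ Icc (0:ℝ) T, |g₁ t| ≤ M)
    (hg₂bdd : ∃ M : ℝ, ∀ t ∈ Icc (0:ℝ) T, |g₂ t| ≤ M)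
    (hg : ∀ t ∈ Icc (0:ℝ) T, g₁ t ≤ g₂ t)
    (hy₁ : ∀ t ∈ Icc (0:ℝ) T, y₁ t = x₁ + (∫ s in (0:ℝ)..t, a (y₁ s)) + g₁ t)
    (hy₂ : ∀ t ∈ Icc (0:ℝ) T, y₂ t = x₂ + (∫ s in (0:ℝ)..t, a (y₂ s)) + g₂ t) :
    ∀ t ∈ Icc (0:ℝ) T, y₁ t ≤ y₂ t := by
  obtain ⟨M₁, hM₁⟩ := hg₁bdd
  obtain ⟨M₂, hM₂⟩ := hg₂bdd
  have hacont : Continuous a := ha_lip.continuous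
  set f₁ : ℝ → ℝ := fun s => a (y₁ s) with hf₁
  set f₂ : ℝ → ℝ := fun s => a (y₂ s) with hf₂
  have I₁ : IntegrableOn f₁ (Ioc 0 T) :=
    integrableAux a hacont C hC ha_growth T hT x₁ g₁ y₁ hg₁meas M₁ hM₁ hy₁
  have I₂ : IntegrableOn f₂ (Ioc 0 T) :=
    integrableAux a hacont C hC ha_growth T hT x₂ g₂ y₂ hg₂meas M₂ hM₂ hy₂
  have hM₁0 : 0 ≤ M₁ := (abs_nonneg _).trans (hM₁ 0 ⟨le_rfl, hT.le⟩)
  have hM₂0 : 0 ≤ M₂ := (abs_nonneg _).trans (hM₂ 0 ⟨le_rfl, hT.le⟩)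
  -- uniform bound on y₁, y₂
  set R : ℝ := max (|x₁| + (∫ r in Ioc (0:ℝ) T, |f₁ r|) + M₁)
      (|x₂| + (∫ r in Ioc (0:ℝ) T, |f₂ r|) + M₂) with hR
  have hI₁abs : (0:ℝ) ≤ ∫ r in Ioc (0:ℝ) T, |f₁ r| :=
    setIntegral_nonneg measurableSet_Ioc fun r _ => abs_nonneg _
  have hI₂abs : (0:ℝ) ≤ ∫ r in Ioc (0:ℝ) T, |f₂ r| :=
    setIntegral_nonneg measurableSet_Ioc fun r _ => abs_nonneg _
  have hR0 : 0 ≤ R := le_max_iff.mpr (Or.inl (by positivity))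
  have hbound : ∀ t ∈ Icc (0:ℝ) T, |y₁ t| ≤ R ∧ |y₂ t| ≤ R := by
    intro t htI
    have key : ∀ (x : ℝ) (g y : ℝ → ℝ) (M : ℝ), (∀ s ∈ Icc (0:ℝ) T, |g s| ≤ M) →
        (∀ s ∈ Icc (0:ℝ) T, y s = x + (∫ u in (0:ℝ)..s, a (y u)) + g s) →
        IntegrableOn (fun s => a (y s)) (Ioc 0 T) →
        |y t| ≤ |x| + (∫ r in Ioc (0:ℝ) T, |a (y r)|) + M := by
      intro x g y M hgb hy hint
      have h1 : |∫ u in (0:ℝ)..t, a (y u)| ≤ ∫ r in Ioc (0:ℝ) T, |a (y r)| := by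
        rw [intervalIntegral.integral_of_le htI.1]
        refine (MeasureTheory.norm_integral_le_integral_norm (fun u => a (y u))).trans ?_
        simp only [Real.norm_eq_abs]
        apply setIntegral_mono_set hint.abs
          (Eventually.of_forall fun r => abs_nonneg _)
          (HasSubset.Subset.eventuallyLE (Ioc_subset_Ioc_right htI.2))
      rw [hy t htI]
      calc |x + (∫ u in (0:ℝ)..t, a (y u)) + g t|
          ≤ |x| + |∫ u in (0:ℝ)..t, a (y u)| + |g t| :=
            (abs_add_le _ _).trans (add_le_add_left (abs_add_le _ _) _)
        _ ≤ |x| + (∫ r in Ioc (0:ℝ) T, |a (y r)|) + M :=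
            add_le_add (add_le_add_right h1 _) (hgb t htI)
    exact ⟨(key x₁ g₁ y₁ M₁ hM₁ hy₁ I₁).trans (le_max_left _ _),
      (key x₂ g₂ y₂ M₂ hM₂ hy₂ I₂).trans (le_max_right _ _)⟩
  -- Lipschitz constant on [-R, R]
  obtain ⟨L, hL0, hLip⟩ := lipOnIcc a ha_lip R
  set L' : ℝ := L + 1 with hL'
  have hL'pos : 0 < L' := by positivity
  -- measurable model for max (y₁ - y₂) 0
  have hclamp : Continuous fun t : ℝ => max 0 (min t T) :=
    continuous_const.max (continuous_id.min continuous_const)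
  have hclampmem : ∀ t : ℝ, max 0 (min t T) ∈ Icc (0:ℝ) T :=
    fun t => ⟨le_max_left _ _, max_le (hT.le) (min_le_right _ _)⟩
  have hclampid : ∀ t ∈ Icc (0:ℝ) T, max 0 (min t T) = t := by
    intro t ht
    rw [min_eq_left ht.2, max_eq_right ht.1]
  set Q₁ : ℝ → ℝ := fun c => ∫ r in Ioc (0:ℝ) c, f₁ r with hQ₁
  set Q₂ : ℝ → ℝ := fun c => ∫ r in Ioc (0:ℝ) c, f₂ r with hQ₂
  have hQ₁cont : ContinuousOn Q₁ (Icc 0 T) :=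
    continuousOn_primitive ((integrableOn_Icc_iff_integrableOn_Ioc (a := (0:ℝ))).mpr I₁)
  have hQ₂cont : ContinuousOn Q₂ (Icc 0 T) :=
    continuousOn_primitive ((integrableOn_Icc_iff_integrableOn_Ioc (a := (0:ℝ))).mpr I₂)
  set Y₁ : ℝ → ℝ := fun t => x₁ + Q₁ (max 0 (min t T)) + g₁ t with hY₁
  set Y₂ : ℝ → ℝ := fun t => x₂ + Q₂ (max 0 (min t T)) + g₂ t with hY₂
  have hY₁meas : Measurable Y₁ :=
    ((hQ₁cont.comp_continuous hclamp hclampmem).measurable.const_add x₁).add hg₁meas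
  have hY₂meas : Measurable Y₂ :=
    ((hQ₂cont.comp_continuous hclamp hclampmem).measurable.const_add x₂).add hg₂meas
  have hYeq : ∀ t ∈ Icc (0:ℝ) T, Y₁ t = y₁ t ∧ Y₂ t = y₂ t := by
    intro t ht
    constructor
    · rw [hY₁, hy₁ t ht]
      simp only [hclampid t ht, hQ₁, intervalIntegral.integral_of_le ht.1]
    · rw [hY₂, hy₂ t ht]
      simp only [hclampid t ht, hQ₂, intervalIntegral.integral_of_le ht.1]
  set ψ : ℝ → ℝ := fun t => max (Y₁ t - Y₂ t) 0 with hψ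
  have hψmeas : Measurable ψ := (hY₁meas.sub hY₂meas).max measurable_const
  have hψnonneg : ∀ t, 0 ≤ ψ t := fun t => le_max_right _ _
  have hψbd : ∀ t ∈ Icc (0:ℝ) T, ψ t ≤ 2 * R := by
    intro t ht
    apply max_le _ (by linarith)
    rw [(hYeq t ht).1, (hYeq t ht).2]
    have h1 := (abs_le.mp (hbound t ht).1).2
    have h2 := (abs_le.mp (hbound t ht).2).1
    linarith
  have hψint : IntegrableOn ψ (Ioc 0 T) := by
    apply Integrable.mono' (g := fun _ => 2 * R)
      (integrableOn_const measure_Ioc_lt_top.ne)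
      hψmeas.aestronglyMeasurable.restrict
    rw [ae_restrict_iff' measurableSet_Ioc]
    apply Eventually.of_forall
    intro s hs
    have := hψbd s ⟨hs.1.le, hs.2⟩
    rw [Real.norm_eq_abs, abs_of_nonneg (hψnonneg s)]
    exact this
  -- the key integral inequality
  have hineq : ∀ s ∈ Icc (0:ℝ) T, ψ s ≤ 0 + L' * ∫ r in Ioc (0:ℝ) s, ψ r := by
    intro s hs
    have hsub : Ioc (0:ℝ) s ⊆ Ioc (0:ℝ) T := Ioc_subset_Ioc_right hs.2
    have hint₁ : IntegrableOn f₁ (Ioc 0 s) := I₁.mono_set hsub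
    have hint₂ : IntegrableOn f₂ (Ioc 0 s) := I₂.mono_set hsub
    have hψints : IntegrableOn ψ (Ioc 0 s) := hψint.mono_set hsub
    have hψintnonneg : (0:ℝ) ≤ ∫ r in Ioc (0:ℝ) s, ψ r :=
      setIntegral_nonneg measurableSet_Ioc fun r _ => hψnonneg r
    rw [zero_add]
    have hYy := hYeq s hs
    have hψs : ψ s = max (y₁ s - y₂ s) 0 := by
      simp only [hψ, hYy.1, hYy.2]
    rw [hψs]
    apply max_le _ (mul_nonneg hL'pos.le hψintnonneg)
    have hdiff : y₁ s - y₂ s ≤ ∫ r in Ioc (0:ℝ) s, (f₁ r - f₂ r) := by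
      have hsplit : (∫ r in Ioc (0:ℝ) s, (f₁ r - f₂ r))
          = (∫ r in Ioc (0:ℝ) s, f₁ r) - ∫ r in Ioc (0:ℝ) s, f₂ r := integral_sub hint₁ hint₂
      rw [hy₁ s hs, hy₂ s hs, intervalIntegral.integral_of_le hs.1,
        intervalIntegral.integral_of_le hs.1]
      have := hg s hs
      linarith [hsplit]
    have hmono2 : (∫ r in Ioc (0:ℝ) s, (f₁ r - f₂ r)) ≤ ∫ r in Ioc (0:ℝ) s, L' * ψ r := by
      apply setIntegral_mono_on (hint₁.sub hint₂) (hψints.const_mul L') measurableSet_Ioc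
      intro r hr
      have hrIcc : r ∈ Icc (0:ℝ) T := ⟨hr.1.le, hr.2.trans hs.2⟩
      have hb := hbound r hrIcc
      have hy₁m : y₁ r ∈ Icc (-R) R := abs_le.mp hb.1 |>.imp (fun h => by linarith) id
      have hy₂m : y₂ r ∈ Icc (-R) R := abs_le.mp hb.2 |>.imp (fun h => by linarith) id
      rcases le_or_gt (y₁ r) (y₂ r) with hle | hgt
      · have : f₁ r ≤ f₂ r := ha_mono hle
        have : f₁ r - f₂ r ≤ 0 := by linarith
        exact this.trans (by positivity)
      · have hlp := hLip (y₁ r) hy₁m (y₂ r) hy₂m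
        have habs : |y₁ r - y₂ r| = y₁ r - y₂ r := abs_of_pos (by linarith)
        have hψr : ψ r = y₁ r - y₂ r := by
          rw [hψ]
          simp only [(hYeq r hrIcc).1, (hYeq r hrIcc).2]
          exact max_eq_left (by linarith)
        have h1 : f₁ r - f₂ r ≤ |f₁ r - f₂ r| := le_abs_self _
        rw [habs] at hlp
        have h2 : L * (y₁ r - y₂ r) ≤ L' * (y₁ r - y₂ r) :=
          mul_le_mul_of_nonneg_right (by linarith) (by linarith)
        rw [hψr]
        exact h1.trans (hlp.trans h2)
    have hmul : (∫ r in Ioc (0:ℝ) s, L' * ψ r) = L' * ∫ r in Ioc (0:ℝ) s, ψ r :=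
      MeasureTheory.integral_const_mul _ _
    exact hdiff.trans (hmono2.trans (le_of_eq hmul))
  -- apply the iteration lemma and conclude
  have hfinal := keyIter ψ T 0 L' (2 * R) hT.le le_rfl hL'pos hψint hψbd hineq
  intro t ht
  have := hfinal t ht
  rw [zero_mul] at this
  have hψt : y₁ t - y₂ t ≤ ψ t := by
    rw [hψ]
    simp only [(hYeq t ht).1, (hYeq t ht).2]
    exact le_max_left _ _
  linarith
end

section
/- Let α ∈ (0,1), c > 0, ε > 0, T > 0, let x₁ ≤ x₂ be real numbers, and let g₁, g₂ : [0,T] → ℝ be bounded measurable functions with g₁(t) ≤ g₂(t) for all t ∈ [0,T]. Suppose y₁, y₂ : [0,T] → ℝ are bounded measurable functions such that y₁(t) ≥ ε for all t ∈ [0,T], y₁(t) ≤ x₁ + c ∫₀ᵗ y₁(s)^α ds + g₁(t) for all t ∈ [0,T], and y₂(t) ≥ x₂ + c ∫₀ᵗ |y₂(s)|^α ds + g₂(t) for all t ∈ [0,T]. Then y₁(t) ≤ y₂(t) for all t ∈ [0,T]. -/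
/-!
On the range `[ε, M]` of `y₁` the drift satisfies the one-sided Lipschitz bound
`a ^ α - |b| ^ α ≤ L (a - b)⁺` for every real `b`: by concavity of `x ↦ x ^ α` (its tangent line
at `b`) when `b ≥ ε / 2`, and crudely from `a ^ α ≤ M ^ α` when `a - b > ε / 2`. Subtracting the
two integral inequalities, `f = (y₁ - y₂)⁺` satisfies `f t ≤ c L ∫₀ᵗ f`, and Grönwall's argument,
iterated to `f t ≤ B (c L t) ^ n / n!`, gives `f = 0`.
-/

open Set intervalIntegral MeasureTheory Filter Topology
open scoped Nat

lemma Real.rpow_le_rpow_add_mul_sub {α a b : ℝ} (hα0 : 0 ≤ α) (hα1 : α ≤ 1) (ha : 0 ≤ a)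
    (hb : 0 < b) : a ^ α ≤ b ^ α + α * b ^ (α - 1) * (a - b) := by
  have hs : -1 ≤ (a - b) / b := by rw [le_div_iff₀ hb]; linarith
  calc a ^ α = b ^ α * (1 + (a - b) / b) ^ α := by
        rw [← Real.mul_rpow hb.le (by linarith)]
        congr 1
        field_simp
        ring
    _ ≤ b ^ α * (1 + α * ((a - b) / b)) := by
        gcongr
        exact rpow_one_add_le_one_add_mul_self hs hα0 hα1
    _ = b ^ α + α * b ^ (α - 1) * (a - b) := by
        rw [Real.rpow_sub_one hb.ne']
        field_simp

lemma exists_rpow_sub_abs_rpow_le_mul_max {α ε M : ℝ} (hα0 : 0 ≤ α) (hα1 : α ≤ 1)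
    (hε : 0 < ε) :
    ∃ L, 0 ≤ L ∧ ∀ a ∈ Icc ε M, ∀ b : ℝ, a ^ α - |b| ^ α ≤ L * max (a - b) 0 := by
  refine ⟨α * (ε / 2) ^ (α - 1) + 2 * |M| ^ α / ε, by positivity, ?_⟩
  rintro a ⟨hεa, haM⟩ b
  have ha : 0 < a := hε.trans_le hεa
  rcases le_or_gt a b with hab | hba
  · have : a ^ α ≤ |b| ^ α := Real.rpow_le_rpow ha.le (hab.trans (le_abs_self b)) hα0
    have : 0 ≤ (α * (ε / 2) ^ (α - 1) + 2 * |M| ^ α / ε) * max (a - b) 0 := by positivity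
    linarith
  rw [max_eq_left (sub_nonneg.2 hba.le)]
  rcases le_or_gt (ε / 2) b with hεb | hbε
  · have hb : 0 < b := by linarith
    calc a ^ α - |b| ^ α ≤ α * b ^ (α - 1) * (a - b) := by
          rw [abs_of_pos hb]
          linarith [Real.rpow_le_rpow_add_mul_sub hα0 hα1 ha.le hb]
      _ ≤ α * (ε / 2) ^ (α - 1) * (a - b) := by
          have := Real.rpow_le_rpow_of_nonpos (by positivity) hεb (by linarith : α - 1 ≤ 0)
          gcongr
      _ ≤ (α * (ε / 2) ^ (α - 1) + 2 * |M| ^ α / ε) * (a - b) := by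
          gcongr
          exact le_add_of_nonneg_right (by positivity)
  · -- here `a - b > ε / 2`, so the crude bound `a ^ α ≤ |M| ^ α` suffices
    have : 0 ≤ |b| ^ α := by positivity
    have : a ^ α ≤ |M| ^ α := Real.rpow_le_rpow ha.le (haM.trans (le_abs_self M)) hα0
    calc a ^ α - |b| ^ α ≤ 2 * |M| ^ α / ε * (ε / 2) := by field_simp; linarith
      _ ≤ (α * (ε / 2) ^ (α - 1) + 2 * |M| ^ α / ε) * (a - b) :=
          mul_le_mul (le_add_of_nonneg_left (by positivity)) (by linarith) (by positivity)
            (by positivity)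

lemma integrableOn_Icc_of_abs_le {f : ℝ → ℝ} {a b C : ℝ} (hf : Measurable f)
    (hC : ∀ t ∈ Icc a b, |f t| ≤ C) : IntegrableOn f (Icc a b) := by
  refine Measure.integrableOn_of_bounded (M := C) measure_Icc_lt_top.ne hf.aestronglyMeasurable ?_
  filter_upwards [ae_restrict_mem measurableSet_Icc] with t ht
  exact hC t ht

lemma MeasureTheory.IntegrableOn.intervalIntegrable_of_mem_Icc {f : ℝ → ℝ} {a b t : ℝ}
    (hf : IntegrableOn f (Icc a b)) (ht : t ∈ Icc a b) : IntervalIntegrable f volume a t :=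
  (intervalIntegrable_iff_integrableOn_Icc_of_le ht.1).2 (hf.mono_set (Icc_subset_Icc_right ht.2))

lemma le_mul_pow_div_factorial_of_le_mul_integral {f : ℝ → ℝ} {K B T : ℝ} (hK : 0 ≤ K)
    (hfi : IntegrableOn f (Icc 0 T)) (hfB : ∀ t ∈ Icc 0 T, f t ≤ B)
    (hf : ∀ t ∈ Icc 0 T, f t ≤ K * ∫ s in 0..t, f s) (n : ℕ) :
    ∀ t ∈ Icc 0 T, f t ≤ B * (K * t) ^ n / n ! := by
  induction n with
  | zero => simpa using hfB
  | succ n ih =>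
    intro t ht
    have hint : ∫ s in 0..t, f s ≤ ∫ s in 0..t, B * K ^ n / n ! * s ^ n :=
      integral_mono_on ht.1 (hfi.intervalIntegrable_of_mem_Icc ht)
        ((continuous_const.mul (continuous_pow n)).intervalIntegrable 0 t)
        fun s hs => (ih s ⟨hs.1, hs.2.trans ht.2⟩).trans_eq (by ring)
    calc f t ≤ K * ∫ s in 0..t, f s := hf t ht
      _ ≤ K * ∫ s in 0..t, B * K ^ n / n ! * s ^ n := by gcongr
      _ = B * (K * t) ^ (n + 1) / (n + 1)! := by
        rw [intervalIntegral.integral_const_mul, integral_pow, Nat.factorial_succ]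
        push_cast
        field_simp
        ring

lemma le_zero_of_le_mul_integral {f : ℝ → ℝ} {K B T : ℝ} (hK : 0 ≤ K)
    (hfi : IntegrableOn f (Icc 0 T)) (hfB : ∀ t ∈ Icc 0 T, f t ≤ B)
    (hf : ∀ t ∈ Icc 0 T, f t ≤ K * ∫ s in 0..t, f s) :
    ∀ t ∈ Icc 0 T, f t ≤ 0 := by
  intro t ht
  have hlim : Tendsto (fun n : ℕ => B * (K * t) ^ n / n !) atTop (𝓝 0) := by
    simpa [mul_div_assoc] using (FloorSemiring.tendsto_pow_div_factorial_atTop (K * t)).const_mul B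
  exact ge_of_tendsto' hlim fun n =>
    le_mul_pow_div_factorial_of_le_mul_integral hK hfi hfB hf n t ht

theorem le_of_subsolution_of_supersolution {c L T x₁ x₂ : ℝ} {g₁ g₂ y₁ y₂ u₁ u₂ : ℝ → ℝ}
    (hc : 0 ≤ c) (hL : 0 ≤ L) (hx : x₁ ≤ x₂) (hg : ∀ t ∈ Icc 0 T, g₁ t ≤ g₂ t)
    (hy₁i : IntegrableOn y₁ (Icc 0 T)) (hy₂i : IntegrableOn y₂ (Icc 0 T))
    (hu₁i : IntegrableOn u₁ (Icc 0 T)) (hu₂i : IntegrableOn u₂ (Icc 0 T))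
    (hB : ∃ B, ∀ t ∈ Icc 0 T, y₁ t - y₂ t ≤ B)
    (hu : ∀ t ∈ Icc 0 T, u₁ t - u₂ t ≤ L * max (y₁ t - y₂ t) 0)
    (hy₁ : ∀ t ∈ Icc 0 T, y₁ t ≤ x₁ + c * (∫ s in 0..t, u₁ s) + g₁ t)
    (hy₂ : ∀ t ∈ Icc 0 T, x₂ + c * (∫ s in 0..t, u₂ s) + g₂ t ≤ y₂ t) :
    ∀ t ∈ Icc 0 T, y₁ t ≤ y₂ t := by
  set f : ℝ → ℝ := fun t => max (y₁ t - y₂ t) 0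
  have hfi : IntegrableOn f (Icc 0 T) := (hy₁i.sub hy₂i).pos_part
  obtain ⟨B, hB⟩ := hB
  have hfB : ∀ t ∈ Icc 0 T, f t ≤ max B 0 := fun t ht => max_le_max_right 0 (hB t ht)
  have hf : ∀ t ∈ Icc 0 T, f t ≤ c * L * ∫ s in 0..t, f s := by
    intro t ht
    have hu₁t := hu₁i.intervalIntegrable_of_mem_Icc ht
    have hu₂t := hu₂i.intervalIntegrable_of_mem_Icc ht
    have hdrift : (∫ s in 0..t, u₁ s) - (∫ s in 0..t, u₂ s) ≤ L * ∫ s in 0..t, f s := by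
      rw [← intervalIntegral.integral_sub hu₁t hu₂t, ← intervalIntegral.integral_const_mul]
      exact integral_mono_on ht.1 (hu₁t.sub hu₂t)
        ((hfi.intervalIntegrable_of_mem_Icc ht).const_mul L)
        fun s hs => hu s ⟨hs.1, hs.2.trans ht.2⟩
    have hdiff : y₁ t - y₂ t ≤ c * L * ∫ s in 0..t, f s := by
      nlinarith [hy₁ t ht, hy₂ t ht, hg t ht, mul_le_mul_of_nonneg_left hdrift hc]
    have hf_nonneg : 0 ≤ ∫ s in 0..t, f s := integral_nonneg ht.1 fun s _ => le_max_right _ _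
    exact max_le hdiff (by positivity)
  intro t ht
  linarith [le_max_left (y₁ t - y₂ t) 0,
    le_zero_of_le_mul_integral (mul_nonneg hc hL) hfi hfB hf t ht]

theorem stmt1_general (α c ε T x₁ x₂ : ℝ) (hα : α ∈ Set.Ioo (0:ℝ) 1) (hc : 0 < c)
    (hε : 0 < ε) (hx : x₁ ≤ x₂)
    (g₁ g₂ y₁ y₂ : ℝ → ℝ)
    (hy₁meas : Measurable y₁) (hy₂meas : Measurable y₂)
    (hy₁bdd : ∃ M : ℝ, ∀ t ∈ Icc (0:ℝ) T, |y₁ t| ≤ M)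
    (hy₂bdd : ∃ M : ℝ, ∀ t ∈ Icc (0:ℝ) T, |y₂ t| ≤ M)
    (hg : ∀ t ∈ Icc (0:ℝ) T, g₁ t ≤ g₂ t)
    (hy₁pos : ∀ t ∈ Icc (0:ℝ) T, ε ≤ y₁ t)
    (hy₁sub : ∀ t ∈ Icc (0:ℝ) T, y₁ t ≤ x₁ + c * (∫ s in (0:ℝ)..t, y₁ s ^ α) + g₁ t)
    (hy₂sup : ∀ t ∈ Icc (0:ℝ) T, x₂ + c * (∫ s in (0:ℝ)..t, |y₂ s| ^ α) + g₂ t ≤ y₂ t) :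
    ∀ t ∈ Icc (0:ℝ) T, y₁ t ≤ y₂ t := by
  obtain ⟨hα0, hα1⟩ := hα
  obtain ⟨M₁, hM₁⟩ := hy₁bdd
  obtain ⟨M₂, hM₂⟩ := hy₂bdd
  obtain ⟨L, hL, hdrift⟩ := exists_rpow_sub_abs_rpow_le_mul_max (M := M₁) hα0.le hα1.le hε
  have hy₁mem : ∀ t ∈ Icc 0 T, y₁ t ∈ Icc ε M₁ := fun t ht =>
    ⟨hy₁pos t ht, (le_abs_self _).trans (hM₁ t ht)⟩
  have hrpow : Measurable fun x : ℝ => x ^ α := (Real.continuous_rpow_const hα0.le).measurable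
  have hy₁α : ∀ t ∈ Icc 0 T, |y₁ t ^ α| ≤ M₁ ^ α := fun t ht => by
    rw [abs_of_nonneg (Real.rpow_nonneg (hε.le.trans (hy₁pos t ht)) α)]
    exact Real.rpow_le_rpow (hε.le.trans (hy₁pos t ht)) (hy₁mem t ht).2 hα0.le
  have hy₂α : ∀ t ∈ Icc 0 T, |(|y₂ t| ^ α)| ≤ M₂ ^ α := fun t ht => by
    rw [abs_of_nonneg (by positivity)]
    exact Real.rpow_le_rpow (abs_nonneg _) (hM₂ t ht) hα0.le
  refine le_of_subsolution_of_supersolution hc.le hL hx hg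
    (integrableOn_Icc_of_abs_le hy₁meas hM₁) (integrableOn_Icc_of_abs_le hy₂meas hM₂)
    (integrableOn_Icc_of_abs_le (hrpow.comp hy₁meas) hy₁α)
    (integrableOn_Icc_of_abs_le (hrpow.comp hy₂meas.abs) hy₂α) ⟨M₁ + M₂, fun t ht => ?_⟩
    (fun t ht => hdrift _ (hy₁mem t ht) _) hy₁sub hy₂sup
  linarith [(abs_le.1 (hM₁ t ht)).2, (abs_le.1 (hM₂ t ht)).1]

/-- Comparison principle between a subsolution bounded away from `0` and a
supersolution of `y(t) = x + c ∫₀ᵗ |y(s)|^α ds + g(t)`, `α ∈ (0,1)`. -/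
theorem stmt1 (α c ε T x₁ x₂ : ℝ) (hα : α ∈ Set.Ioo (0:ℝ) 1) (hc : 0 < c)
    (hε : 0 < ε) (hT : 0 < T) (hx : x₁ ≤ x₂)
    (g₁ g₂ y₁ y₂ : ℝ → ℝ)
    (hg₁meas : Measurable g₁) (hg₂meas : Measurable g₂)
    (hg₁bdd : ∃ M : ℝ, ∀ t ∈ Icc (0:ℝ) T, |g₁ t| ≤ M)
    (hg₂bdd : ∃ M : ℝ, ∀ t ∈ Icc (0:ℝ) T, |g₂ t| ≤ M)
    (hy₁meas : Measurable y₁) (hy₂meas : Measurable y₂)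
    (hy₁bdd : ∃ M : ℝ, ∀ t ∈ Icc (0:ℝ) T, |y₁ t| ≤ M)
    (hy₂bdd : ∃ M : ℝ, ∀ t ∈ Icc (0:ℝ) T, |y₂ t| ≤ M)
    (hg : ∀ t ∈ Icc (0:ℝ) T, g₁ t ≤ g₂ t)
    (hy₁pos : ∀ t ∈ Icc (0:ℝ) T, ε ≤ y₁ t)
    (hy₁sub : ∀ t ∈ Icc (0:ℝ) T, y₁ t ≤ x₁ + c * (∫ s in (0:ℝ)..t, y₁ s ^ α) + g₁ t)
    (hy₂sup : ∀ t ∈ Icc (0:ℝ) T, x₂ + c * (∫ s in (0:ℝ)..t, |y₂ s| ^ α) + g₂ t ≤ y₂ t) :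
    ∀ t ∈ Icc (0:ℝ) T, y₁ t ≤ y₂ t :=
  stmt1_general α c ε T x₁ x₂ hα hc hε hx g₁ g₂ y₁ y₂ hy₁meas hy₂meas hy₁bdd hy₂bdd hg hy₁pos hy₁sub
    hy₂sup
end

section
/- Let α ∈ (0,1), c > 0, x ∈ ℝ, and let g : [0,∞) → ℝ be a measurable locally bounded function. Suppose y : [0,∞) → ℝ is measurable, locally bounded and satisfies y(t) = x + c ∫₀ᵗ |y(s)|^α ds + g(t) for all t ≥ 0. Assume that y(t) → +∞ as t → ∞, and that there exist a function h : [0,∞) → ℝ with h(t)/t^{1/(1−α)} → 0 as t → ∞ and a sequence t₁ < t₂ < ⋯ with tₙ → ∞ such that |g(t) − g(tₙ)| ≤ h(t − tₙ) for every n and every t ≥ tₙ. Then y(t)/(c(1−α)t)^{1/(1−α)} → 1 as t → ∞. -/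
open Set Filter Topology intervalIntegral

/-- Continuous-induction comparison lemma. -/
lemma cross_lemma (T s₀ : ℝ) (hT : T ≤ s₀) (u v : ℝ → ℝ)
    (hu : ContinuousOn u (Icc T s₀)) (hv : ContinuousOn v (Icc T s₀))
    (h0 : u T < v T)
    (hloc : ∀ s, T ≤ s → s < s₀ → u s = v s →
      ∃ δ > 0, ∀ τ, s < τ → τ ≤ s + δ → τ ≤ s₀ → u τ < v τ) :
    u s₀ ≤ v s₀ := by
  by_contra hvu
  push_neg at hvu
  set A : Set ℝ := {s | s ∈ Icc T s₀ ∧ ∀ r ∈ Icc T s, u r ≤ v r} with hA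
  have hTA : T ∈ A := by
    refine ⟨⟨le_refl _, hT⟩, ?_⟩
    intro r hr
    have : r = T := le_antisymm hr.2 hr.1
    simpa [this] using h0.le
  have hAne : A.Nonempty := ⟨T, hTA⟩
  have hAbdd : BddAbove A := ⟨s₀, fun s hs => hs.1.2⟩
  set e := sSup A with he
  have hTe : T ≤ e := le_csSup hAbdd hTA
  have hes₀ : e ≤ s₀ := csSup_le hAne fun s hs => hs.1.2
  have hlt : ∀ r, T ≤ r → r < e → u r ≤ v r := by
    intro r hTr hre
    obtain ⟨s, hsA, hrs⟩ := exists_lt_of_lt_csSup hAne hre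
    exact hsA.2 r ⟨hTr, hrs.le⟩
  have hue : u e ≤ v e := by
    rcases eq_or_lt_of_le hTe with heq | hTe'
    · rw [← heq]; exact h0.le
    · have hmem : e ∈ closure (Ico T e) := by
        rw [closure_Ico (ne_of_lt hTe')]
        exact ⟨hTe, le_refl _⟩
      have hsub : Ico T e ⊆ Icc T s₀ := fun r hr => ⟨hr.1, hr.2.le.trans hes₀⟩
      have hne : (𝓝[Ico T e] e).NeBot := mem_closure_iff_nhdsWithin_neBot.1 hmem
      have hcu : Tendsto u (𝓝[Ico T e] e) (𝓝 (u e)) :=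
        ((hu e ⟨hTe, hes₀⟩).mono hsub).tendsto
      have hcv : Tendsto v (𝓝[Ico T e] e) (𝓝 (v e)) :=
        ((hv e ⟨hTe, hes₀⟩).mono hsub).tendsto
      refine le_of_tendsto_of_tendsto hcu hcv ?_
      filter_upwards [self_mem_nhdsWithin] with r hr
      exact hlt r hr.1 hr.2
  have heA : e ∈ A := by
    refine ⟨⟨hTe, hes₀⟩, ?_⟩
    intro r hr
    rcases eq_or_lt_of_le hr.2 with rfl | hre
    · exact hue
    · exact hlt r hr.1 hre
  rcases eq_or_lt_of_le hes₀ with heq | hlt₀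
  · rw [heq] at hue; exact absurd hue (not_le.2 hvu)
  rcases eq_or_lt_of_le hue with heq | hlt'
  · obtain ⟨δ, hδ, hδ'⟩ := hloc e hTe hlt₀ heq
    have hτA : min (e + δ) s₀ ∈ A := by
      constructor
      · exact ⟨hTe.trans (le_min (by linarith) hes₀), min_le_right _ _⟩
      · intro r hr
        rcases le_or_gt r e with hre | hre
        · exact heA.2 r ⟨hr.1, hre⟩
        · exact (hδ' r hre (hr.2.trans (min_le_left _ _))
            (hr.2.trans (min_le_right _ _))).le
    have := le_csSup hAbdd hτA
    have h1 : e < min (e + δ) s₀ := lt_min (by linarith) hlt₀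
    linarith
  · have hcont : ContinuousWithinAt (fun r => v r - u r) (Icc T s₀) e :=
      ((hv e ⟨hTe, hes₀⟩).sub (hu e ⟨hTe, hes₀⟩))
    have hpos : (0:ℝ) < v e - u e := by linarith
    have hev : ∀ᶠ r in 𝓝[Icc T s₀] e, 0 < v r - u r :=
      hcont.eventually (eventually_gt_nhds hpos)
    rw [eventually_nhdsWithin_iff] at hev
    obtain ⟨δ, hδ, hδ'⟩ := Metric.eventually_nhds_iff.1 hev
    have hτA : min (e + δ/2) s₀ ∈ A := by
      constructor
      · exact ⟨hTe.trans (le_min (by linarith) hes₀), min_le_right _ _⟩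
      · intro r hr
        rcases le_or_gt r e with hre | hre
        · exact heA.2 r ⟨hr.1, hre⟩
        · have hr₀ : r ∈ Icc T s₀ := ⟨hr.1, hr.2.trans (min_le_right _ _)⟩
          have hrd : dist r e < δ := by
            rw [Real.dist_eq, abs_of_pos (by linarith)]
            have := hr.2.trans (min_le_left _ _)
            linarith
          have := hδ' hrd hr₀
          linarith
    have := le_csSup hAbdd hτA
    have h1 : e < min (e + δ/2) s₀ := lt_min (by linarith) hlt₀
    linarith

/-- Tangent-line inequality for convex `rpow`. -/
lemma bern_tangent {β X Y : ℝ} (hβ : 1 ≤ β) (hX : 0 ≤ X) (hY : 0 < Y) :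
    Y ^ β + β * (Y ^ β / Y) * (X - Y) ≤ X ^ β := by
  have hs : -1 ≤ X / Y - 1 := by
    have : 0 ≤ X / Y := div_nonneg hX hY.le
    linarith
  have h1 := one_add_mul_self_le_rpow_one_add hs hβ
  have h2 : (1 + (X / Y - 1)) ^ β = X ^ β / Y ^ β := by
    rw [show 1 + (X/Y - 1) = X / Y by ring, Real.div_rpow hX hY.le]
  rw [h2] at h1
  have hYβ : 0 < Y ^ β := Real.rpow_pos_of_pos hY β
  calc Y ^ β + β * (Y ^ β / Y) * (X - Y) = Y ^ β * (1 + β * (X / Y - 1)) := by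
        field_simp
    _ ≤ Y ^ β * (X ^ β / Y ^ β) := mul_le_mul_of_nonneg_left h1 hYβ.le
    _ = X ^ β := by field_simp

lemma rpow_aux {β z a : ℝ} (hβ : 0 < β) (hz : 0 ≤ z) (h : z ^ β⁻¹ ≤ a) :
    z ≤ a ^ β :=
  calc z = (z ^ β⁻¹) ^ β := (Real.rpow_inv_rpow hz hβ.ne').symm
    _ ≤ a ^ β := Real.rpow_le_rpow (Real.rpow_nonneg hz _) h hβ.le

lemma rpow_aux' {β z a : ℝ} (hβ : 0 < β) (hz : 0 ≤ z) (h : z ^ β⁻¹ < a) :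
    z < a ^ β :=
  calc z = (z ^ β⁻¹) ^ β := (Real.rpow_inv_rpow hz hβ.ne').symm
    _ < a ^ β := Real.rpow_lt_rpow (Real.rpow_nonneg hz _) h hβ
set_option maxHeartbeats 1000000 in
/-- Exact growth rate `y(t) ∼ (c(1−α)t)^{1/(1−α)}` for solutions of
`y(t) = x + c ∫₀ᵗ |y(s)|^α ds + g(t)`, `α ∈ (0,1)`, that tend to `+∞`,
when the increments of `g` after a sequence of times `tₙ → ∞` are dominated by
a function `h(t) = o(t^{1/(1−α)})`. -/
theorem stmt2 (α c x : ℝ) (hα : α ∈ Set.Ioo (0:ℝ) 1) (hc : 0 < c)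
    (g y h : ℝ → ℝ) (t : ℕ → ℝ)
    (hgmeas : Measurable g)
    (hgloc : ∀ T : ℝ, ∃ M : ℝ, ∀ s ∈ Icc (0:ℝ) T, |g s| ≤ M)
    (hymeas : Measurable y)
    (hyloc : ∀ T : ℝ, ∃ M : ℝ, ∀ s ∈ Icc (0:ℝ) T, |y s| ≤ M)
    (hyeq : ∀ s : ℝ, 0 ≤ s → y s = x + c * (∫ u in (0:ℝ)..s, |y u| ^ α) + g s)
    (hylim : Tendsto y atTop atTop)
    (hh : Tendsto (fun s : ℝ => h s / s ^ (1 / (1 - α))) atTop (nhds 0))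
    (ht_mono : StrictMono t)
    (ht_lim : Tendsto t atTop atTop)
    (hg_incr : ∀ n : ℕ, ∀ s : ℝ, t n ≤ s → |g s - g (t n)| ≤ h (s - t n)) :
    Tendsto (fun s : ℝ => y s / (c * (1 - α) * s) ^ (1 / (1 - α))) atTop (nhds 1) := by
  obtain ⟨hα0, hα1⟩ := hα
  have h1α : 0 < 1 - α := by linarith
  obtain ⟨β, hβdef⟩ : ∃ β : ℝ, β = 1 / (1 - α) := ⟨_, rfl⟩
  rw [← hβdef] at hh ⊢
  have hβ1 : 1 < β := by rw [hβdef, lt_div_iff₀ h1α]; linarith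
  have hβ0 : 0 < β := by linarith
  have hαβ : β - 1 = α * β := by rw [hβdef]; field_simp; ring
  obtain ⟨C, hCdef⟩ : ∃ C : ℝ, C = (c * (1 - α)) ^ β := ⟨_, rfl⟩
  have hC : 0 < C := hCdef ▸ Real.rpow_pos_of_pos (by positivity) β
  -- the integrand
  obtain ⟨f, hfeq, hfnn, hfmeas⟩ :
      ∃ f : ℝ → ℝ, (∀ u, f u = |y u| ^ α) ∧ (∀ u, 0 ≤ f u) ∧ Measurable f := by
    refine ⟨fun u => |y u| ^ α, fun u => rfl, fun u => Real.rpow_nonneg (abs_nonneg _) α, ?_⟩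
    exact (Real.continuous_rpow_const hα0.le).measurable.comp hymeas.abs
  have hint : ∀ a b : ℝ, 0 ≤ a → 0 ≤ b → IntervalIntegrable f MeasureTheory.volume a b := by
    intro a b ha hb
    obtain ⟨M, hM⟩ := hyloc (max a b)
    rw [intervalIntegrable_iff]
    apply MeasureTheory.Measure.integrableOn_of_bounded (M := (max M 0) ^ α)
    · exact (measure_Ioc_lt_top).ne
    · exact hfmeas.aestronglyMeasurable
    · rw [MeasureTheory.ae_restrict_iff' measurableSet_uIoc]
      filter_upwards with u hu
      have hu' : u ∈ Icc (0:ℝ) (max a b) := ⟨le_trans (le_min ha hb) hu.1.le, hu.2⟩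
      have h1 : |y u| ≤ max M 0 := (hM u hu').trans (le_max_left _ _)
      have h2 : f u ≤ (max M 0) ^ α := by
        rw [hfeq]; exact Real.rpow_le_rpow (abs_nonneg _) h1 hα0.le
      rw [Real.norm_eq_abs, abs_of_nonneg (hfnn u)]
      exact h2
  -- the primitive
  obtain ⟨A, hyA, hAsub, hAmono, hAcont⟩ :
      ∃ A : ℝ → ℝ, (∀ s : ℝ, 0 ≤ s → y s = x + c * A s + g s) ∧
        (∀ u s : ℝ, 0 ≤ u → 0 ≤ s → A s - A u = ∫ σ in u..s, f σ) ∧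
        (∀ u s : ℝ, 0 ≤ u → u ≤ s → A u ≤ A s) ∧
        (∀ b : ℝ, 0 ≤ b → ContinuousOn A (Icc 0 b)) := by
    refine ⟨fun s => ∫ u in (0:ℝ)..s, f u, ?_, ?_, ?_, ?_⟩
    · intro s hs
      show y s = x + c * (∫ u in (0:ℝ)..s, f u) + g s
      simp only [hfeq]
      exact hyeq s hs
    · intro u s hu hs
      exact integral_interval_sub_left (hint 0 s le_rfl hs) (hint 0 u le_rfl hu)
    · intro u s hu hus
      have h1 := integral_interval_sub_left (hint 0 s le_rfl (hu.trans hus))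
        (hint 0 u le_rfl hu)
      have h2 : 0 ≤ ∫ σ in u..s, f σ :=
        intervalIntegral.integral_nonneg hus fun σ _ => hfnn σ
      have := h1.symm ▸ h2
      linarith [this]
    · intro b hb
      have := intervalIntegral.continuousOn_primitive_interval'
        (hint 0 b le_rfl hb) (left_mem_uIcc (a := (0:ℝ)) (b := b))
      rwa [uIcc_of_le hb] at this
  -- integral bounds by constants
  have hIub : ∀ s τ K : ℝ, 0 ≤ s → s ≤ τ → (∀ σ ∈ Icc s τ, f σ ≤ K) →
      (∫ σ in s..τ, f σ) ≤ (τ - s) * K := by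
    intro s τ K hs hsτ hK
    have h1 := intervalIntegral.integral_mono_on hsτ (hint s τ hs (hs.trans hsτ))
      intervalIntegrable_const hK
    simpa [intervalIntegral.integral_const, smul_eq_mul] using h1
  have hIlb : ∀ s τ k : ℝ, 0 ≤ s → s ≤ τ → (∀ σ ∈ Icc s τ, k ≤ f σ) →
      (τ - s) * k ≤ ∫ σ in s..τ, f σ := by
    intro s τ k hs hsτ hk
    have h1 := intervalIntegral.integral_mono_on hsτ intervalIntegrable_const
      (hint s τ hs (hs.trans hsτ)) hk
    simpa [intervalIntegral.integral_const, smul_eq_mul] using h1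
  -- eventual bound on h
  have hhb : ∀ ε : ℝ, 0 < ε → ∃ Tε : ℝ, 1 ≤ Tε ∧ ∀ τ, Tε ≤ τ → h τ ≤ ε * τ ^ β := by
    intro ε hε
    have h1 : ∀ᶠ τ in atTop, dist (h τ / τ ^ β) 0 < ε := (Metric.tendsto_nhds.1 hh) ε hε
    obtain ⟨T', hT'⟩ := eventually_atTop.1 h1
    refine ⟨max T' 1, le_max_right _ _, ?_⟩
    intro τ hτ
    have hτ1 : (1:ℝ) ≤ τ := le_trans (le_max_right _ _) hτ
    have hτβ : 0 < τ ^ β := Real.rpow_pos_of_pos (by linarith) β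
    have h2 := hT' τ (le_trans (le_max_left _ _) hτ)
    rw [Real.dist_eq, sub_zero] at h2
    have h3 : h τ / τ ^ β < ε := lt_of_le_of_lt (le_abs_self _) h2
    have := (div_lt_iff₀ hτβ).1 h3
    linarith
  -- eventual positivity of y
  obtain ⟨S₀, hS₀0, hS₀⟩ : ∃ S₀ : ℝ, 0 ≤ S₀ ∧ ∀ s, S₀ ≤ s → 1 ≤ y s := by
    obtain ⟨S', hS'⟩ := eventually_atTop.1 (hylim.eventually_ge_atTop 1)
    exact ⟨max S' 0, le_max_right _ _, fun s hs => hS' s (le_trans (le_max_left _ _) hs)⟩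
  have hyt : Tendsto (fun n => y (t n)) atTop atTop := hylim.comp ht_lim
  -- ═══════════════════ UPPER BOUND ═══════════════════
  have hUB : ∀ δ : ℝ, 0 < δ → δ ≤ 1 → ∀ᶠ s in atTop, y s ≤ (1 + δ) * (C * s ^ β) := by
    intro δ hδ0 hδ1
    have h2β : (0:ℝ) < 2*β := by linarith
    obtain ⟨η, hη0, hη1, hηpow⟩ :
        ∃ η : ℝ, 0 < η ∧ η ≤ 1 ∧ (1+η) ^ (2*β) ≤ 1 + δ/3 := by
      have hgt1 : 1 < (1 + δ/3) ^ (2*β)⁻¹ :=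
        (Real.one_lt_rpow_iff_of_pos (by linarith)).2 (Or.inl ⟨by linarith, inv_pos.2 h2β⟩)
      refine ⟨min ((1 + δ/3) ^ (2*β)⁻¹ - 1) 1, lt_min (by linarith) one_pos,
        min_le_right _ _, ?_⟩
      have h1 : min ((1 + δ/3) ^ (2*β)⁻¹ - 1) 1 ≤ (1 + δ/3) ^ (2*β)⁻¹ - 1 := min_le_left _ _
      have h2 : (0:ℝ) < min ((1 + δ/3) ^ (2*β)⁻¹ - 1) 1 := lt_min (by linarith) one_pos
      calc (1 + min ((1 + δ/3) ^ (2*β)⁻¹ - 1) 1) ^ (2*β)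
          ≤ ((1 + δ/3) ^ (2*β)⁻¹) ^ (2*β) :=
            Real.rpow_le_rpow (by linarith) (by linarith) (by linarith)
        _ = 1 + δ/3 := Real.rpow_inv_rpow (by linarith) (ne_of_gt h2β)
    obtain ⟨b, hb0, hbβ, hbβpow⟩ :
        ∃ b : ℝ, 0 < b ∧ b * β = (1+η)*c ∧ b ^ β = (1+η)^β * C := by
      refine ⟨(1+η)*c*(1-α), mul_pos (mul_pos (by linarith) hc) h1α, ?_, ?_⟩
      · rw [hβdef]; field_simp
      · rw [hCdef, show (1+η)*c*(1-α) = (1+η)*(c*(1-α)) by ring,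
          Real.mul_rpow (by linarith) (by positivity)]
    have hbβp : 0 < b ^ β := Real.rpow_pos_of_pos hb0 β
    obtain ⟨ρ, hρ0, hρpow⟩ : ∃ ρ : ℝ, 0 < ρ ∧ (1+ρ)^α = 1 + η := by
      refine ⟨(1+η)^α⁻¹ - 1, ?_, ?_⟩
      · have : 1 < (1+η)^α⁻¹ :=
          (Real.one_lt_rpow_iff_of_pos (by linarith)).2 (Or.inl ⟨by linarith, inv_pos.2 hα0⟩)
        linarith
      · rw [show 1 + ((1+η)^α⁻¹ - 1) = (1+η)^α⁻¹ by ring,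
          Real.rpow_inv_rpow (by linarith) hα0.ne']
    obtain ⟨ε, hε0, hε1, hε2⟩ :
        ∃ ε : ℝ, 0 < ε ∧ ε ≤ ρ/3 * b^β ∧ ε ≤ δ/3 * C :=
      ⟨min (ρ/3 * b^β) (δ/3 * C), lt_min (by positivity) (by positivity),
        min_le_left _ _, min_le_right _ _⟩
    obtain ⟨Tε, hTε1, hTεh⟩ := hhb ε hε0
    obtain ⟨tn, htn0, htninc⟩ :
        ∃ tn : ℝ, 0 ≤ tn ∧ ∀ s, tn ≤ s → |g s - g tn| ≤ h (s - tn) := by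
      obtain ⟨n₀, hn₀⟩ := (ht_lim.eventually_ge_atTop (0:ℝ)).exists
      exact ⟨t n₀, hn₀, hg_incr n₀⟩
    obtain ⟨G0, hG0nn, hG0g⟩ : ∃ G0 : ℝ, 0 ≤ G0 ∧ |g tn| ≤ G0 := ⟨|g tn|, abs_nonneg _, le_rfl⟩
    obtain ⟨T₀, hT₀1, hT₀tn, hT₀S⟩ :
        ∃ T₀ : ℝ, 1 ≤ T₀ ∧ tn + Tε ≤ T₀ ∧ S₀ ≤ T₀ :=
      ⟨max (max (tn + Tε) S₀) 1, le_max_right _ _,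
        le_trans (le_max_left _ _) (le_max_left _ _),
        le_trans (le_max_right _ _) (le_max_left _ _)⟩
    have hT₀0 : (0:ℝ) < T₀ := by linarith
    have hgb : ∀ σ, T₀ ≤ σ → g σ ≤ G0 + ε * σ ^ β := by
      intro σ hσ
      have h3 : Tε ≤ σ - tn := by linarith
      have h2 := htninc σ (by linarith)
      have h4 := hTεh _ h3
      have h5 : (σ - tn)^β ≤ σ^β := Real.rpow_le_rpow (by linarith) (by linarith) hβ0.le
      have h6 : ε * (σ - tn)^β ≤ ε * σ^β := mul_le_mul_of_nonneg_left h5 hε0.le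
      have h7 : g tn ≤ G0 := (le_abs_self _).trans hG0g
      calc g σ = (g σ - g tn) + g tn := by ring
        _ ≤ h (σ - tn) + G0 := add_le_add ((le_abs_self _).trans h2) h7
        _ ≤ ε * (σ - tn)^β + G0 := by linarith
        _ ≤ G0 + ε * σ^β := by linarith
    obtain ⟨w, hw⟩ : ∃ w : ℝ → ℝ, ∀ s, w s = x + c * A s := ⟨_, fun _ => rfl⟩
    have hwmono : ∀ u s : ℝ, 0 ≤ u → u ≤ s → w u ≤ w s := by
      intro u s hu hus
      have h1 := mul_le_mul_of_nonneg_left (hAmono u s hu hus) hc.le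
      rw [hw, hw]
      linarith
    have hwcont : ∀ s₀ : ℝ, 0 < s₀ → ContinuousOn w (Icc T₀ s₀) := by
      intro s₀ hs₀
      have hbasec : ContinuousOn (fun u => x + c * A u) (Icc T₀ s₀) :=
        continuousOn_const.add (continuousOn_const.mul
          ((hAcont s₀ hs₀.le).mono (Icc_subset_Icc_left hT₀0.le)))
      exact hbasec.congr (fun u _ => hw u)
    obtain ⟨a, ha1, habT₀, haG, haw⟩ :
        ∃ a : ℝ, 1 ≤ a ∧ b*T₀ ≤ a ∧ G0 ≤ ρ/3 * a^β ∧ w T₀ < a^β := by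
      obtain ⟨M, hM1, hM2, hM3, hM4⟩ :
          ∃ M : ℝ, b*T₀ ≤ M ∧ 1 ≤ M ∧ (3*G0/ρ)^β⁻¹ ≤ M ∧ (|w T₀|)^β⁻¹ ≤ M := by
        refine ⟨max (max (b*T₀) 1) (max ((3*G0/ρ) ^ β⁻¹) ((|w T₀|) ^ β⁻¹)), ?_, ?_, ?_, ?_⟩
        · exact le_trans (le_max_left _ _) (le_max_left _ _)
        · exact le_trans (le_max_right _ _) (le_max_left _ _)
        · exact le_trans (le_max_left _ _) (le_max_right _ _)
        · exact le_trans (le_max_right _ _) (le_max_right _ _)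
      refine ⟨M + 1, by linarith, by linarith, ?_, ?_⟩
      · have h3 : 3*G0/ρ ≤ (M+1)^β := rpow_aux hβ0 (by positivity) (by linarith)
        calc G0 = ρ/3 * (3*G0/ρ) := by field_simp
          _ ≤ ρ/3 * (M+1)^β := mul_le_mul_of_nonneg_left h3 (by positivity)
      · have h3 : |w T₀| < (M+1)^β := rpow_aux' hβ0 (abs_nonneg _) (by linarith)
        exact lt_of_le_of_lt (le_abs_self _) h3
    obtain ⟨V, hV⟩ : ∃ V : ℝ → ℝ, ∀ s, V s = (a + b*(s - T₀))^β := ⟨_, fun _ => rfl⟩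
    have hVbase : ∀ s, T₀ ≤ s → 0 < a + b*(s-T₀) := by
      intro s hs
      have := mul_nonneg hb0.le (sub_nonneg.2 hs)
      linarith
    have hVpos : ∀ s, T₀ ≤ s → 0 < V s := by
      intro s hs; rw [hV]; exact Real.rpow_pos_of_pos (hVbase s hs) β
    have hVlb1 : ∀ s, T₀ ≤ s → a^β ≤ V s := by
      intro s hs; rw [hV]
      have := mul_nonneg hb0.le (sub_nonneg.2 hs)
      exact Real.rpow_le_rpow (by linarith) (by linarith) hβ0.le
    have hVlb2 : ∀ s, T₀ ≤ s → b^β * s^β ≤ V s := by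
      intro s hs
      have hs0 : (0:ℝ) ≤ s := by linarith
      have h1 : b*s ≤ a + b*(s-T₀) := by
        have e1 : b*(s-T₀) = b*s - b*T₀ := by ring
        linarith
      have h2 : (b*s)^β ≤ V s := by
        rw [hV]; exact Real.rpow_le_rpow (mul_nonneg hb0.le hs0) h1 hβ0.le
      rwa [Real.mul_rpow hb0.le hs0] at h2
    have hkey : ∀ s, T₀ ≤ s → (V s + G0 + ε*s^β)^α < (1+η) * (V s)^α := by
      intro s hs
      have hsβ : (0:ℝ) ≤ s^β := Real.rpow_nonneg (by linarith) β
      have h1 : ε*s^β ≤ ρ/3 * V s := by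
        have e1 : ε * s^β ≤ ρ/3 * b^β * s^β := mul_le_mul_of_nonneg_right hε1 hsβ
        have e2 : ρ/3 * (b^β * s^β) ≤ ρ/3 * V s :=
          mul_le_mul_of_nonneg_left (hVlb2 s hs) (by positivity)
        calc ε*s^β ≤ ρ/3 * b^β * s^β := e1
          _ = ρ/3 * (b^β * s^β) := by ring
          _ ≤ ρ/3 * V s := e2
      have h2 : G0 ≤ ρ/3 * V s :=
        haG.trans (mul_le_mul_of_nonneg_left (hVlb1 s hs) (by positivity))
      have h3 : V s + G0 + ε*s^β < (1+ρ) * V s := by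
        have e1 : (1+ρ)*V s = V s + 3*(ρ/3*V s) := by ring
        have e2 : 0 < ρ/3*V s := mul_pos (by linarith) (hVpos s hs)
        linarith
      have hbase : (0:ℝ) ≤ V s + G0 + ε*s^β :=
        add_nonneg (add_nonneg (hVpos s hs).le hG0nn) (mul_nonneg hε0.le hsβ)
      calc (V s + G0 + ε*s^β)^α < ((1+ρ)*V s)^α := Real.rpow_lt_rpow hbase h3 hα0
        _ = (1+ρ)^α * (V s)^α := Real.mul_rpow (by linarith) (hVpos s hs).le
        _ = (1+η)*(V s)^α := by rw [hρpow]
    -- the comparison via cross_lemma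
    have hcomp : ∀ s₀, T₀ ≤ s₀ → w s₀ ≤ V s₀ := by
      intro s₀ hs₀
      have hVc : ContinuousOn V (Icc T₀ s₀) := by
        refine ContinuousOn.congr (Continuous.continuousOn ?_) (fun s _ => hV s)
        exact (Real.continuous_rpow_const hβ0.le).comp
          (continuous_const.add (continuous_const.mul (continuous_id.sub continuous_const)))
      have hinit : w T₀ < V T₀ := by
        rw [hV]
        simpa only [sub_self, mul_zero, add_zero] using haw
      apply cross_lemma T₀ s₀ hs₀ w V (hwcont s₀ (by linarith)) hVc hinit
      intro s hsT hss₀ heq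
      obtain ⟨F, hF⟩ : ∃ F : ℝ → ℝ,
          ∀ τ, F τ = (1+η)*c*(V s)^α - c*(w τ + G0 + ε*τ^β)^α := ⟨_, fun _ => rfl⟩
      have hFs : 0 < F s := by
        have h1 := hkey s hsT
        have h2 := mul_lt_mul_of_pos_left h1 hc
        have e1 : c*((1+η)*(V s)^α) = (1+η)*c*(V s)^α := by ring
        rw [hF, heq]
        linarith
      have hFc : ContinuousWithinAt F (Icc T₀ s₀) s := by
        have hsmem : s ∈ Icc T₀ s₀ := ⟨hsT, hss₀.le⟩
        have base : ContinuousWithinAt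
            (fun τ => (1+η)*c*(V s)^α - c*(w τ + G0 + ε*τ^β)^α) (Icc T₀ s₀) s := by
          apply ContinuousWithinAt.sub continuousWithinAt_const
          apply ContinuousWithinAt.mul continuousWithinAt_const
          apply ContinuousWithinAt.rpow_const ?_ (Or.inr hα0.le)
          exact ((hwcont s₀ (by linarith) s hsmem).add continuousWithinAt_const).add
            (continuousWithinAt_const.mul
              ((Real.continuous_rpow_const hβ0.le).continuousWithinAt))
        refine ContinuousWithinAt.congr base (fun τ _ => hF τ) (hF s)
      have hev : ∀ᶠ τ in 𝓝[Icc T₀ s₀] s, 0 < F τ :=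
        hFc.eventually (eventually_gt_nhds hFs)
      rw [eventually_nhdsWithin_iff] at hev
      obtain ⟨δ', hδ'0, hδ'⟩ := Metric.eventually_nhds_iff.1 hev
      refine ⟨δ'/2, by linarith, ?_⟩
      intro τ hsτ hτδ hτs₀
      have hτT₀ : T₀ ≤ τ := by linarith
      have hτmem : τ ∈ Icc T₀ s₀ := ⟨hτT₀, hτs₀⟩
      have hFτ : 0 < F τ := by
        apply hδ' ?_ hτmem
        rw [Real.dist_eq, abs_of_pos (by linarith)]
        linarith
      -- integral estimate
      have hwub : w τ - w s ≤ c * ((τ - s) * (w τ + G0 + ε*τ^β)^α) := by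
        have hiq : w τ - w s = c * ∫ σ in s..τ, f σ := by
          rw [hw, hw, ← hAsub s τ (by linarith) (by linarith)]
          ring
        have hptw : ∀ σ ∈ Icc s τ, f σ ≤ (w τ + G0 + ε*τ^β)^α := by
          intro σ hσ
          have hσ0 : (0:ℝ) ≤ σ := by linarith [hσ.1]
          have hyσ : 1 ≤ y σ := hS₀ σ (by linarith [hσ.1])
          have hgσ : g σ ≤ G0 + ε*σ^β := hgb σ (by linarith [hσ.1])
          have hwσ : w σ ≤ w τ := hwmono σ τ hσ0 hσ.2
          have hσβ : σ^β ≤ τ^β := Real.rpow_le_rpow hσ0 hσ.2 hβ0.le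
          have hyb : |y σ| ≤ w τ + G0 + ε*τ^β := by
            rw [abs_of_nonneg (by linarith)]
            have h5 := hyA σ hσ0
            have h6 : ε * σ^β ≤ ε * τ^β := mul_le_mul_of_nonneg_left hσβ hε0.le
            have h8 := hw σ
            linarith
          rw [hfeq]
          exact Real.rpow_le_rpow (abs_nonneg _) hyb hα0.le
        have hic := hIub s τ _ (by linarith) (by linarith) hptw
        have h7 : c * (∫ σ in s..τ, f σ) ≤ c * ((τ - s) * (w τ + G0 + ε*τ^β)^α) :=
          mul_le_mul_of_nonneg_left hic hc.le
        linarith [hiq ▸ h7]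
      -- convexity estimate for V
      have hVlbb : V s + (τ - s) * ((1+η)*c*(V s)^α) ≤ V τ := by
        have hYpos : (0:ℝ) < a + b*(s - T₀) := hVbase s hsT
        have hXnn : (0:ℝ) ≤ a + b*(τ - T₀) := (hVbase τ hτT₀).le
        have e1 := bern_tangent hβ1.le hXnn hYpos
        have e2 : (a + b*(s-T₀))^β / (a + b*(s-T₀)) = (V s)^α := by
          rw [← Real.rpow_sub_one hYpos.ne' β, hαβ, mul_comm α β,
            Real.rpow_mul hYpos.le, hV]
        rw [e2, show (a + b*(τ-T₀)) - (a + b*(s-T₀)) = b*(τ - s) by ring] at e1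
        have e4 : β * (V s)^α * (b*(τ-s)) = (τ - s) * ((1+η)*c*(V s)^α) := by
          rw [show β * (V s)^α * (b*(τ-s)) = (τ-s)*((b*β)*(V s)^α) by ring, hbβ]
        rw [← hV s, ← hV τ] at e1
        linarith [e1, e4]
      -- combine
      have hcmb : (τ - s) * F τ ≤ V τ - w τ := by
        have h9 : (τ - s) * F τ
            = (τ-s)*((1+η)*c*(V s)^α) - c*((τ-s)*(w τ + G0 + ε*τ^β)^α) := by
          rw [hF]; ring
        rw [h9]
        have hws : w s = V s := heq
        linarith
      have := mul_pos (by linarith : (0:ℝ) < τ - s) hFτ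
      linarith
    -- conclude the upper bound
    rw [eventually_atTop]
    refine ⟨max (max T₀ (a/(η*b))) ((3*G0/(δ*C)) ^ β⁻¹), ?_⟩
    intro s hs
    have hsT₀ : T₀ ≤ s := le_trans (le_trans (le_max_left _ _) (le_max_left _ _)) hs
    have hs1 : (1:ℝ) ≤ s := le_trans hT₀1 hsT₀
    have hs0 : (0:ℝ) < s := by linarith
    have hsβnn : (0:ℝ) ≤ s^β := Real.rpow_nonneg hs0.le β
    have h1 : w s ≤ V s := hcomp s hsT₀
    have h3 : g s ≤ G0 + ε*s^β := hgb s hsT₀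
    have hηb : 0 < η*b := mul_pos hη0 hb0
    have h4 : V s ≤ (1 + δ/3)*(C*s^β) := by
      have ha_le : a ≤ η*b*s := by
        have hdl : a/(η*b) ≤ s := le_trans (le_trans (le_max_right _ _) (le_max_left _ _)) hs
        calc a = (a/(η*b))*(η*b) := by field_simp
          _ ≤ s*(η*b) := mul_le_mul_of_nonneg_right hdl hηb.le
          _ = η*b*s := by ring
      have hbase2 : a + b*(s - T₀) ≤ (1+η)*(b*s) := by
        have e1 : b*(s-T₀) = b*s - b*T₀ := by ring
        have e2 : (1+η)*(b*s) = b*s + η*b*s := by ring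
        have e3 : 0 ≤ b*T₀ := mul_nonneg hb0.le hT₀0.le
        linarith
      have h4a : V s ≤ ((1+η)*(b*s))^β := by
        rw [hV]; exact Real.rpow_le_rpow (hVbase s hsT₀).le hbase2 hβ0.le
      have h4b : ((1+η)*(b*s))^β = (1+η)^β*(b^β*s^β) := by
        rw [Real.mul_rpow (by linarith) (by positivity), Real.mul_rpow hb0.le hs0.le]
      have h4e : (1+η)^(2*β) = (1+η)^β*(1+η)^β := by
        rw [two_mul, Real.rpow_add (by linarith : (0:ℝ) < 1+η)]
      have h4c : (1+η)^β*(b^β*s^β) = (1+η)^(2*β)*(C*s^β) := by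
        rw [hbβpow, h4e]; ring
      have h4d : (1+η)^(2*β)*(C*s^β) ≤ (1+δ/3)*(C*s^β) :=
        mul_le_mul_of_nonneg_right hηpow (by positivity)
      calc V s ≤ ((1+η)*(b*s))^β := h4a
        _ = (1+η)^(2*β)*(C*s^β) := by rw [h4b, h4c]
        _ ≤ (1+δ/3)*(C*s^β) := h4d
    have h5 : G0 ≤ δ/3*(C*s^β) := by
      have h5a : (3*G0/(δ*C))^β⁻¹ ≤ s := le_trans (le_max_right _ _) hs
      have h5b : 3*G0/(δ*C) ≤ s^β := rpow_aux hβ0 (by positivity) h5a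
      have h5d := mul_le_mul_of_nonneg_left h5b (by positivity : (0:ℝ) ≤ δ*C/3)
      calc G0 = δ*C/3 * (3*G0/(δ*C)) := by field_simp
        _ ≤ δ*C/3 * s^β := h5d
        _ = δ/3*(C*s^β) := by ring
    have h6 : ε*s^β ≤ δ/3*(C*s^β) := by
      have := mul_le_mul_of_nonneg_right hε2 hsβnn
      calc ε*s^β ≤ (δ/3*C)*s^β := this
        _ = δ/3*(C*s^β) := by ring
    have hy : y s = w s + g s := by
      rw [hyA s hs0.le, hw]
    rw [hy]
    have hCs : (0:ℝ) ≤ C*s^β := by positivity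
    linarith
  -- ═══════════════════ LOWER BOUND ═══════════════════
  have hLB : ∀ δ : ℝ, 0 < δ → δ ≤ 1 → ∀ᶠ s in atTop, (1 - δ) * (C * s ^ β) ≤ y s := by
    intro δ hδ0 hδ1
    have h2β : (0:ℝ) < 2*β := by linarith
    obtain ⟨η, hη0, hη1, hηpow⟩ :
        ∃ η : ℝ, 0 < η ∧ η ≤ 1/2 ∧ 1 - δ/3 ≤ (1-η) ^ (2*β) := by
      have hbase0 : (0:ℝ) < 1 - δ/3 := by linarith
      have hlt1 : (1 - δ/3) ^ (2*β)⁻¹ < 1 :=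
        Real.rpow_lt_one hbase0.le (by linarith) (inv_pos.2 h2β)
      have hpos : 0 < (1 - δ/3) ^ (2*β)⁻¹ := Real.rpow_pos_of_pos hbase0 _
      refine ⟨min (1 - (1 - δ/3)^(2*β)⁻¹) 2⁻¹, lt_min (by linarith) (by norm_num),
        le_trans (min_le_right _ _) (by norm_num), ?_⟩
      have h1 : min (1 - (1 - δ/3)^(2*β)⁻¹) 2⁻¹ ≤ 1 - (1 - δ/3)^(2*β)⁻¹ := min_le_left _ _
      calc 1 - δ/3 = ((1 - δ/3)^(2*β)⁻¹)^(2*β) :=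
            (Real.rpow_inv_rpow hbase0.le (ne_of_gt h2β)).symm
        _ ≤ (1 - min (1 - (1 - δ/3)^(2*β)⁻¹) 2⁻¹)^(2*β) :=
            Real.rpow_le_rpow hpos.le (by linarith) (by linarith)
    obtain ⟨b, hb0, hbβ, hbβpow⟩ :
        ∃ b : ℝ, 0 < b ∧ b * β = (1-η)*c ∧ b ^ β = (1-η)^β * C := by
      refine ⟨(1-η)*c*(1-α), mul_pos (mul_pos (by linarith) hc) h1α, ?_, ?_⟩
      · rw [hβdef]; field_simp
      · rw [hCdef, show (1-η)*c*(1-α) = (1-η)*(c*(1-α)) by ring,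
          Real.mul_rpow (by linarith) (by positivity)]
    have hbβp : 0 < b ^ β := Real.rpow_pos_of_pos hb0 β
    obtain ⟨ρ', hρ'0, hρ'1, hρ'pow⟩ :
        ∃ ρ' : ℝ, 0 < ρ' ∧ ρ' < 1 ∧ ρ'^α = 1 - η/2 :=
      ⟨(1 - η/2)^α⁻¹, Real.rpow_pos_of_pos (by linarith) _,
        Real.rpow_lt_one (by linarith) (by linarith) (inv_pos.2 hα0),
        Real.rpow_inv_rpow (by linarith) hα0.ne'⟩
    obtain ⟨ε, hε0, hε1, hε2⟩ :
        ∃ ε : ℝ, 0 < ε ∧ ε ≤ (1-ρ') * b^β ∧ ε ≤ δ/3 * C :=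
      ⟨min ((1-ρ') * b^β) (δ/3 * C),
        lt_min (mul_pos (by linarith) hbβp) (by positivity),
        min_le_left _ _, min_le_right _ _⟩
    obtain ⟨Tε, hTε1, hTεh⟩ := hhb ε hε0
    obtain ⟨m, hm1, hmbT⟩ : ∃ m : ℝ, 1 ≤ m ∧ b*Tε ≤ m :=
      ⟨max (b*Tε) 1, le_max_right _ _, le_max_left _ _⟩
    obtain ⟨tn, htn0, htnval, htninc⟩ :
        ∃ tn : ℝ, 0 ≤ tn ∧ m^β < y tn ∧ ∀ s, tn ≤ s → |g s - g tn| ≤ h (s - tn) := by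
      have h1 := (ht_lim.eventually_ge_atTop (0:ℝ)).and
        (hyt.eventually (eventually_gt_atTop (m^β)))
      obtain ⟨n₁, hn₁⟩ := h1.exists
      exact ⟨t n₁, hn₁.1, hn₁.2, hg_incr n₁⟩
    obtain ⟨P, hPdef⟩ : ∃ P : ℝ, P = tn + Tε := ⟨_, rfl⟩
    have hP1 : 1 ≤ P := by rw [hPdef]; linarith
    have hPtn : tn ≤ P := by rw [hPdef]; linarith
    have hP0 : (0:ℝ) < P := by linarith
    obtain ⟨wn, hwn⟩ : ∃ wn : ℝ → ℝ, ∀ s, wn s = y tn + c*(A s - A tn) := ⟨_, fun _ => rfl⟩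
    have hwnmono : ∀ u s : ℝ, 0 ≤ u → u ≤ s → wn u ≤ wn s := by
      intro u s hu hus
      have h1 := mul_le_mul_of_nonneg_left (sub_le_sub_right (hAmono u s hu hus) (A tn)) hc.le
      rw [hwn, hwn]
      linarith
    have hwncont : ∀ s₀ : ℝ, 0 < s₀ → ContinuousOn wn (Icc P s₀) := by
      intro s₀ hs₀
      have hbasec : ContinuousOn (fun u => y tn + c * (A u - A tn)) (Icc P s₀) :=
        continuousOn_const.add (continuousOn_const.mul
          (((hAcont s₀ hs₀.le).mono (Icc_subset_Icc_left hP0.le)).sub continuousOn_const))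
      exact hbasec.congr (fun u _ => hwn u)
    have hywn : ∀ σ, P ≤ σ → wn σ - ε*(σ - tn)^β ≤ y σ := by
      intro σ hσ
      have hσtn : tn ≤ σ := by linarith
      have h2 := htninc σ hσtn
      have h4 := hTεh (σ - tn) (by rw [hPdef] at hσ; linarith)
      have e1 := hyA σ (by linarith : (0:ℝ) ≤ σ)
      have e2 := hyA tn htn0
      have e3 : y σ = wn σ + (g σ - g tn) := by rw [hwn]; linarith [e1, e2]
      have h5 : -(g σ - g tn) ≤ h (σ - tn) := (neg_le_abs _).trans h2
      linarith
    have hwnP : m^β < wn P := by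
      have h1 := mul_nonneg hc.le (sub_nonneg.2 (hAmono tn P htn0 hPtn))
      have h2 := hwn P
      linarith
    obtain ⟨V, hV⟩ : ∃ V : ℝ → ℝ, ∀ s, V s = (m + b*(s - P))^β := ⟨_, fun _ => rfl⟩
    have hVbase : ∀ s, P ≤ s → 0 < m + b*(s - P) := by
      intro s hs
      have := mul_nonneg hb0.le (sub_nonneg.2 hs)
      linarith
    have hVpos : ∀ s, P ≤ s → 0 < V s := by
      intro s hs; rw [hV]; exact Real.rpow_pos_of_pos (hVbase s hs) β
    have habs : ∀ s, P ≤ s → ε*(s - tn)^β ≤ (1-ρ') * V s := by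
      intro s hs
      have hstn1 : Tε ≤ s - tn := by rw [hPdef] at hs; linarith
      have hstn0 : (0:ℝ) ≤ s - tn := by linarith
      have hdiff : m + b*(s - P) - b*(s - tn) = m - b*Tε := by rw [hPdef]; ring
      have h1 : b*(s - tn) ≤ m + b*(s - P) := by linarith
      have h2 : (b*(s - tn))^β ≤ V s := by
        rw [hV]; exact Real.rpow_le_rpow (mul_nonneg hb0.le hstn0) h1 hβ0.le
      have h3 : (b*(s - tn))^β = b^β*(s - tn)^β := Real.mul_rpow hb0.le hstn0
      have h4 : ε*(s - tn)^β ≤ (1-ρ')*b^β*(s - tn)^β :=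
        mul_le_mul_of_nonneg_right hε1 (Real.rpow_nonneg hstn0 β)
      have h5 : (1-ρ')*(b^β*(s - tn)^β) ≤ (1-ρ')*V s :=
        mul_le_mul_of_nonneg_left (h3 ▸ h2) (by linarith)
      calc ε*(s - tn)^β ≤ (1-ρ')*b^β*(s - tn)^β := h4
        _ = (1-ρ')*(b^β*(s - tn)^β) := by ring
        _ ≤ (1-ρ')*V s := h5
    have hkey : ∀ s, P ≤ s → (1-η)*(V s)^α < (max (V s - ε*(s - tn)^β) 0)^α := by
      intro s hs
      have hVp := hVpos s hs
      have h1 := habs s hs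
      have h2 : ρ'*V s ≤ V s - ε*(s - tn)^β := by
        have e1 : (1-ρ')*V s = V s - ρ'*V s := by ring
        linarith
      have h2' : ρ'*V s ≤ max (V s - ε*(s - tn)^β) 0 := le_trans h2 (le_max_left _ _)
      have h3 : (ρ'*V s)^α ≤ (max (V s - ε*(s - tn)^β) 0)^α :=
        Real.rpow_le_rpow (mul_nonneg hρ'0.le hVp.le) h2' hα0.le
      have h4 : (ρ'*V s)^α = (1-η/2)*(V s)^α := by
        rw [Real.mul_rpow hρ'0.le hVp.le, hρ'pow]
      have h5 : 0 < (V s)^α := Real.rpow_pos_of_pos hVp α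
      have h6 : (1-η)*(V s)^α < (1-η/2)*(V s)^α :=
        mul_lt_mul_of_pos_right (by linarith) h5
      linarith
    have hcomp : ∀ s₀, P ≤ s₀ → V s₀ ≤ wn s₀ := by
      intro s₀ hs₀
      have hVc : ContinuousOn V (Icc P s₀) := by
        refine ContinuousOn.congr (Continuous.continuousOn ?_) (fun s _ => hV s)
        exact (Real.continuous_rpow_const hβ0.le).comp
          (continuous_const.add (continuous_const.mul (continuous_id.sub continuous_const)))
      have hinit : V P < wn P := by
        rw [hV]
        simpa only [sub_self, mul_zero, add_zero] using hwnP
      apply cross_lemma P s₀ hs₀ V wn hVc (hwncont s₀ (by linarith)) hinit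
      intro s hsP hss₀ heq
      obtain ⟨F, hF⟩ : ∃ F : ℝ → ℝ, ∀ τ,
          F τ = c*(max (V s - ε*(τ - tn)^β) 0)^α - (1-η)*c*(V τ)^α := ⟨_, fun _ => rfl⟩
      have hFs : 0 < F s := by
        have h1 := hkey s hsP
        have h2 := mul_lt_mul_of_pos_left h1 hc
        have e1 : c*((1-η)*(V s)^α) = (1-η)*c*(V s)^α := by ring
        rw [hF]
        linarith
      have hVcont : Continuous V := by
        have hc1 : Continuous (fun τ => (m + b*(τ - P))^β) :=
          (Real.continuous_rpow_const hβ0.le).comp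
            (continuous_const.add (continuous_const.mul (continuous_id.sub continuous_const)))
        exact hc1.congr (fun τ => (hV τ).symm)
      have hFcont : Continuous F := by
        have hc2 : Continuous (fun τ : ℝ =>
            c*(max (V s - ε*(τ - tn)^β) 0)^α - (1-η)*c*(V τ)^α) := by
          apply Continuous.sub
          · apply continuous_const.mul
            apply (Real.continuous_rpow_const hα0.le).comp
            apply Continuous.max ?_ continuous_const
            exact continuous_const.sub (continuous_const.mul
              ((Real.continuous_rpow_const hβ0.le).comp (continuous_id.sub continuous_const)))
          · exact continuous_const.mul ((Real.continuous_rpow_const hα0.le).comp hVcont)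
        exact hc2.congr (fun τ => (hF τ).symm)
      have hev : ∀ᶠ τ in 𝓝 s, 0 < F τ :=
        (hFcont.continuousAt (x := s)).eventually (eventually_gt_nhds hFs)
      obtain ⟨δ', hδ'0, hδ'⟩ := Metric.eventually_nhds_iff.1 hev
      refine ⟨δ'/2, by linarith, ?_⟩
      intro τ hsτ hτδ hτs₀
      have hτP : P ≤ τ := by linarith
      have hFτ : 0 < F τ := by
        apply hδ'
        rw [Real.dist_eq, abs_of_pos (by linarith)]
        linarith
      -- integral estimate from below
      have hwlb : c*((τ - s)*(max (V s - ε*(τ - tn)^β) 0)^α) ≤ wn τ - wn s := by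
        have hiq : wn τ - wn s = c * ∫ σ in s..τ, f σ := by
          rw [hwn, hwn, ← hAsub s τ (by linarith) (by linarith)]
          ring
        have hptw : ∀ σ ∈ Icc s τ, (max (V s - ε*(τ - tn)^β) 0)^α ≤ f σ := by
          intro σ hσ
          have hσP : P ≤ σ := by linarith [hσ.1]
          rcases le_or_gt (V s - ε*(τ - tn)^β) 0 with hneg | hposb
          · rw [max_eq_right hneg, Real.zero_rpow hα0.ne']
            exact hfnn σ
          · rw [max_eq_left hposb.le]
            have h1 : wn σ - ε*(σ - tn)^β ≤ y σ := hywn σ hσP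
            have h2 : wn s ≤ wn σ := hwnmono s σ (by linarith) hσ.1
            have h3 : (σ - tn)^β ≤ (τ - tn)^β :=
              Real.rpow_le_rpow (by linarith) (by linarith [hσ.2]) hβ0.le
            have h3' : ε*(σ - tn)^β ≤ ε*(τ - tn)^β := mul_le_mul_of_nonneg_left h3 hε0.le
            have heq' : V s = wn s := heq
            have h4 : V s - ε*(τ - tn)^β ≤ y σ := by linarith
            have h5 : y σ ≤ |y σ| := le_abs_self _
            rw [hfeq]
            exact Real.rpow_le_rpow hposb.le (by linarith) hα0.le
        have hic := hIlb s τ _ (by linarith) (by linarith) hptw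
        have h7 := mul_le_mul_of_nonneg_left hic hc.le
        linarith [hiq]
      -- convexity estimate for V (upper tangent at right endpoint)
      have hVub : V τ - V s ≤ (τ - s)*((1-η)*c*(V τ)^α) := by
        have hYpos : (0:ℝ) < m + b*(τ - P) := hVbase τ hτP
        have hXnn : (0:ℝ) ≤ m + b*(s - P) := (hVbase s hsP).le
        have e1 := bern_tangent hβ1.le hXnn hYpos
        have e2 : (m + b*(τ - P))^β / (m + b*(τ - P)) = (V τ)^α := by
          rw [← Real.rpow_sub_one hYpos.ne' β, hαβ, mul_comm α β,
            Real.rpow_mul hYpos.le, hV]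
        rw [e2, show (m + b*(s - P)) - (m + b*(τ - P)) = b*(s - τ) by ring] at e1
        rw [← hV τ, ← hV s] at e1
        have e4 : β*(V τ)^α*(b*(s - τ)) = -((τ - s)*((b*β)*(V τ)^α)) := by ring
        rw [hbβ] at e4
        linarith [e1, e4]
      have hcmb : (τ - s) * F τ ≤ wn τ - V τ := by
        have h9 : (τ - s) * F τ
            = c*((τ - s)*(max (V s - ε*(τ - tn)^β) 0)^α) - (τ - s)*((1-η)*c*(V τ)^α) := by
          rw [hF]; ring
        have heq' : V s = wn s := heq
        rw [h9]
        linarith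
      have := mul_pos (by linarith : (0:ℝ) < τ - s) hFτ
      linarith
    -- conclude the lower bound
    rw [eventually_atTop]
    refine ⟨max (P + 1) (P/η), ?_⟩
    intro s hs
    have hsP : P ≤ s := by
      have := le_trans (le_max_left (P+1) (P/η)) hs
      linarith
    have hs1 : (1:ℝ) ≤ s := le_trans hP1 hsP
    have hs0 : (0:ℝ) < s := by linarith
    have hsβnn : (0:ℝ) ≤ s^β := Real.rpow_nonneg hs0.le β
    have h1 : V s ≤ wn s := hcomp s hsP
    have h2 : wn s - ε*(s - tn)^β ≤ y s := hywn s hsP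
    have h3 : ε*(s - tn)^β ≤ δ/3*(C*s^β) := by
      have hstn0 : (0:ℝ) ≤ s - tn := by linarith
      have e1 : (s - tn)^β ≤ s^β := Real.rpow_le_rpow hstn0 (by linarith) hβ0.le
      have e2 : ε*(s - tn)^β ≤ ε*s^β := mul_le_mul_of_nonneg_left e1 hε0.le
      have e3 : ε*s^β ≤ (δ/3*C)*s^β := mul_le_mul_of_nonneg_right hε2 hsβnn
      calc ε*(s - tn)^β ≤ ε*s^β := e2
        _ ≤ (δ/3*C)*s^β := e3
        _ = δ/3*(C*s^β) := by ring
    have h4 : (1 - δ/3)*(C*s^β) ≤ V s := by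
      have hPs : P ≤ η*s := by
        have hdl : P/η ≤ s := le_trans (le_max_right _ _) hs
        calc P = (P/η)*η := by field_simp
          _ ≤ s*η := mul_le_mul_of_nonneg_right hdl hη0.le
          _ = η*s := by ring
      have hbP : b*P ≤ b*(η*s) := mul_le_mul_of_nonneg_left hPs hb0.le
      have hbase2 : (1-η)*(b*s) ≤ m + b*(s - P) := by
        have e1 : b*(s-P) = b*s - b*P := by ring
        have e2 : (1-η)*(b*s) = b*s - η*(b*s) := by ring
        have e3 : b*(η*s) = η*(b*s) := by ring
        linarith
      have h4a : ((1-η)*(b*s))^β ≤ V s := by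
        rw [hV]
        exact Real.rpow_le_rpow
          (mul_nonneg (by linarith) (mul_nonneg hb0.le hs0.le)) hbase2 hβ0.le
      have h4b : ((1-η)*(b*s))^β = (1-η)^β*(b^β*s^β) := by
        rw [Real.mul_rpow (by linarith) (by positivity), Real.mul_rpow hb0.le hs0.le]
      have h4e : (1-η)^(2*β) = (1-η)^β*(1-η)^β := by
        rw [two_mul, Real.rpow_add (by linarith : (0:ℝ) < 1-η)]
      have h4c : (1-η)^β*(b^β*s^β) = (1-η)^(2*β)*(C*s^β) := by
        rw [hbβpow, h4e]; ring
      have h4d : (1 - δ/3)*(C*s^β) ≤ (1-η)^(2*β)*(C*s^β) :=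
        mul_le_mul_of_nonneg_right hηpow (by positivity)
      calc (1 - δ/3)*(C*s^β) ≤ (1-η)^(2*β)*(C*s^β) := h4d
        _ = (1-η)^β*(b^β*s^β) := h4c.symm
        _ = ((1-η)*(b*s))^β := h4b.symm
        _ ≤ V s := h4a
    have hCs : (0:ℝ) ≤ C*s^β := by positivity
    nlinarith [mul_nonneg hδ0.le hCs]
  -- ═══════════════════ CONCLUSION ═══════════════════
  refine Metric.tendsto_nhds.2 fun ε hε => ?_
  have hδ0 : 0 < min (ε/2) 1 := lt_min (by linarith) one_pos
  have hδ1 : min (ε/2) 1 ≤ 1 := min_le_right _ _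
  filter_upwards [hUB _ hδ0 hδ1, hLB _ hδ0 hδ1, eventually_gt_atTop (0:ℝ)]
    with s h1 h2 hs0
  have hpow : (c * (1 - α) * s) ^ β = C * s ^ β := by
    rw [hCdef, ← Real.mul_rpow (by positivity) hs0.le]
  have hP : 0 < C * s ^ β := mul_pos hC (Real.rpow_pos_of_pos hs0 β)
  rw [Real.dist_eq, hpow]
  have hu' : y s / (C * s ^ β) ≤ 1 + min (ε/2) 1 := (div_le_iff₀ hP).2 (by linarith)
  have hl' : 1 - min (ε/2) 1 ≤ y s / (C * s ^ β) := (le_div_iff₀ hP).2 (by linarith)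
  have habs : |y s / (C * s ^ β) - 1| ≤ min (ε/2) 1 :=
    abs_le.2 ⟨by linarith, by linarith⟩
  have : min (ε/2) 1 ≤ ε/2 := min_le_left _ _
  linarith [habs]
end

section
/- Let α ∈ (0,1) and γ ∈ (0, 1/(1−α)). Define y(t) = t^γ and g(t) = t^γ − t^{αγ+1}/(αγ+1) for t ≥ 0. Then: (i) y(t) = ∫₀ᵗ |y(s)|^α ds + g(t) for all t ≥ 0; (ii) g(t)/t^{1/(1−α)} → 0 as t → ∞; (iii) y(t) → +∞ as t → ∞; and (iv) y(t)/((1−α)t)^{1/(1−α)} → 0 as t → ∞ (so y is not asymptotically equivalent to ((1−α)t)^{1/(1−α)}). -/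
open Set Filter intervalIntegral

/-- Counterexample: `y(t) = t^γ` with `γ ∈ (0, 1/(1−α))` solves
`y(t) = ∫₀ᵗ |y(s)|^α ds + g(t)` with `g(t) = t^γ − t^{αγ+1}/(αγ+1) = o(t^{1/(1−α)})`,
`y(t) → +∞`, yet `y` is not equivalent to `((1−α)t)^{1/(1−α)}`. -/
theorem stmt3 (α γ : ℝ) (hα : α ∈ Set.Ioo (0:ℝ) 1) (hγ : γ ∈ Set.Ioo (0:ℝ) (1 / (1 - α))) :
    (∀ t : ℝ, 0 ≤ t →
      t ^ γ = (∫ s in (0:ℝ)..t, |s ^ γ| ^ α)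
        + (t ^ γ - t ^ (α * γ + 1) / (α * γ + 1)))
    ∧ Tendsto (fun t : ℝ => (t ^ γ - t ^ (α * γ + 1) / (α * γ + 1)) / t ^ (1 / (1 - α)))
        atTop (nhds 0)
    ∧ Tendsto (fun t : ℝ => t ^ γ) atTop atTop
    ∧ Tendsto (fun t : ℝ => t ^ γ / ((1 - α) * t) ^ (1 / (1 - α))) atTop (nhds 0) := by
  obtain ⟨hα0, hα1⟩ := hα
  obtain ⟨hγ0, hγδ⟩ := hγ
  have h1α : (0:ℝ) < 1 - α := by linarith
  set δ : ℝ := 1 / (1 - α) with hδ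
  have hδ0 : 0 < δ := by positivity
  have hγδ' : γ * (1 - α) < 1 := by
    rw [hδ, lt_div_iff₀ h1α] at hγδ; linarith
  have hαγ : 0 < α * γ + 1 := by positivity
  have hkey : α * γ + 1 < δ := by
    rw [hδ, lt_div_iff₀ h1α]; nlinarith
  refine ⟨?_, ?_, ?_, ?_⟩
  · intro t ht
    have hint : (∫ s in (0:ℝ)..t, |s ^ γ| ^ α) = t ^ (α * γ + 1) / (α * γ + 1) := by
      have hcong : (∫ s in (0:ℝ)..t, |s ^ γ| ^ α) = ∫ s in (0:ℝ)..t, s ^ (γ * α) := by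
        apply intervalIntegral.integral_congr
        intro s hs
        have hs0 : 0 ≤ s := by
          rcases Set.mem_uIcc.1 hs with h | h
          · exact h.1
          · linarith [h.1, h.2]
        show |s ^ γ| ^ α = s ^ (γ * α)
        rw [abs_of_nonneg (Real.rpow_nonneg hs0 γ), ← Real.rpow_mul hs0]
      rw [hcong, integral_rpow (Or.inl (by nlinarith)),
        Real.zero_rpow (by nlinarith), mul_comm γ α]
      ring
    rw [hint]; ring
  · have h1 : Tendsto (fun t : ℝ => t ^ (γ - δ)) atTop (nhds 0) := by
      have := tendsto_rpow_neg_atTop (show 0 < δ - γ by linarith)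
      simpa [neg_sub] using this
    have h2 : Tendsto (fun t : ℝ => t ^ (α * γ + 1 - δ) / (α * γ + 1)) atTop (nhds 0) := by
      have := (tendsto_rpow_neg_atTop (show 0 < δ - (α * γ + 1) by linarith)).div_const
        (α * γ + 1)
      simpa [neg_sub] using this
    have h3 := h1.sub h2
    rw [sub_zero] at h3
    apply h3.congr'
    filter_upwards [eventually_gt_atTop 0] with t ht
    rw [Real.rpow_sub ht, Real.rpow_sub ht]
    field_simp
  · exact tendsto_rpow_atTop hγ0
  · have h1 : Tendsto (fun t : ℝ => (1 - α) ^ (-δ) * t ^ (γ - δ)) atTop (nhds 0) := by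
      have := (tendsto_rpow_neg_atTop (show 0 < δ - γ by linarith)).const_mul
        ((1 - α) ^ (-δ))
      simpa [neg_sub] using this
    apply h1.congr'
    filter_upwards [eventually_gt_atTop 0] with t ht
    rw [Real.mul_rpow h1α.le ht.le, Real.rpow_sub ht, Real.rpow_neg h1α.le]
    field_simp
end

section
/- Let α ∈ (0,1), c₊, c₋ > 0, and let B : [0,∞) → ℝ be measurable and locally bounded. Suppose there exist a function h : [0,∞) → [0,∞) with h(t)/t^{1/(1−α)} → 0 as t → ∞ and a sequence t₁ < t₂ < ⋯ with t_{n+1} − tₙ ≥ 1 for all n and tₙ → ∞ such that |B(t) − B(tₙ)| ≤ h(t − tₙ) for every n and every t ≥ tₙ. Let x₁ < x₂ and suppose X₁, X₂ : [0,∞) → ℝ are measurable, locally bounded and satisfy Xᵢ(t) = xᵢ + ∫₀ᵗ (c₊·1_{Xᵢ(s)≥0} − c₋·1_{Xᵢ(s)<0})|Xᵢ(s)|^α ds + B(t) for all t ≥ 0 (i = 1,2). Then lim_{t→∞} X₁(t) = −∞ or lim_{t→∞} X₂(t) = +∞. -/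
open Set Filter intervalIntegral
open MeasureTheory

set_option maxHeartbeats 1000000


lemma my_FC (p c : ℝ) (hc : 0 < c) (W φ : ℝ → ℝ)
    (hW : ∀ q, p ≤ q → ContinuousOn W (Icc p q))
    (hφ : ∀ q, p ≤ q → ContinuousOn φ (Icc p q))
    (step : ∀ q, p ≤ q → (∀ r, p ≤ r → r < q → φ r ≤ W r) → φ q + c ≤ W q) :
    ∀ q, p ≤ q → φ q ≤ W q := by
  by_contra hcon
  push_neg at hcon
  obtain ⟨q₀, hq₀, hlt⟩ := hcon
  set S : Set ℝ := {s | s ∈ Icc p q₀ ∧ W s - φ s ≤ 0} with hS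
  have hSc : IsClosed S := by
    have : S = Icc p q₀ ∩ (fun s => W s - φ s) ⁻¹' Iic 0 := by
      ext s; simp [hS, Set.mem_inter_iff, and_comm]
    rw [this]
    exact ContinuousOn.preimage_isClosed_of_isClosed
      (((hW q₀ hq₀).sub (hφ q₀ hq₀))) isClosed_Icc isClosed_Iic
  have hSne : S.Nonempty := ⟨q₀, ⟨hq₀, le_refl _⟩, by linarith⟩
  have hSbd : BddBelow S := ⟨p, fun s hs => hs.1.1⟩
  have hmem := hSc.csInf_mem hSne hSbd
  set cs := sInf S with hcs
  have hcsp : p ≤ cs := hmem.1.1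
  have hbelow : ∀ r, p ≤ r → r < cs → φ r ≤ W r := by
    intro r hpr hrc
    by_contra hr
    push_neg at hr
    have : r ∈ S := ⟨⟨hpr, hrc.le.trans hmem.1.2⟩, by linarith⟩
    exact absurd (csInf_le hSbd this) (by linarith)
  have := step cs hcsp hbelow
  have := hmem.2
  linarith

lemma my_intInt (g : ℝ → ℝ) (hg : Measurable g)
    (hloc : ∀ T, ∃ M, ∀ s ∈ Icc (0:ℝ) T, |g s| ≤ M) {p q : ℝ} (hp : 0 ≤ p) (hq : 0 ≤ q) :
    IntervalIntegrable g volume p q := by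
  obtain ⟨M, hM⟩ := hloc (max p q)
  have hsub : Set.uIoc p q ⊆ Icc (0:ℝ) (max p q) := fun s hs => by
    rcases hs with ⟨h1, h2⟩
    exact ⟨le_of_lt (lt_of_le_of_lt (le_min hp hq) h1), h2⟩
  rw [intervalIntegrable_iff]
  refine Integrable.mono' (g := fun _ => M) (integrableOn_const measure_Ioc_lt_top.ne)
    hg.aestronglyMeasurable.restrict ?_
  filter_upwards [ae_restrict_mem measurableSet_uIoc] with s hs
  exact (Real.norm_eq_abs _ ▸ hM s (hsub hs))

lemma my_contPrim (g : ℝ → ℝ) (hg : Measurable g)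
    (hloc : ∀ T, ∃ M, ∀ s ∈ Icc (0:ℝ) T, |g s| ≤ M) (τ : ℝ) (hτ : 0 ≤ τ)
    {p q : ℝ} (hp : 0 ≤ p) :
    ContinuousOn (fun s => ∫ u in τ..s, g u) (Icc p q) := by
  rcases le_or_gt q p with h | hpq
  · intro x hx
    have : Icc p q ⊆ {p} := by
      intro y hy; simp only [mem_singleton_iff]; exact le_antisymm (hy.2.trans h) hy.1
    exact (continuousWithinAt_singleton (f := fun s => ∫ u in τ..s, g u) (x := x)).mono
      (by simpa [mem_singleton_iff.1 (this hx)] using this)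
  obtain ⟨M, hM⟩ := hloc (max q τ)
  have hM0 : 0 ≤ M := by
    have := hM τ ⟨hτ, le_max_right _ _⟩; exact (abs_nonneg _).trans this
  have key : ∀ x ∈ Icc p q, ∀ y ∈ Icc p q,
      dist ((fun s => ∫ u in τ..s, g u) x) ((fun s => ∫ u in τ..s, g u) y) ≤ M * dist x y := by
    intro x hx y hy
    have hix : IntervalIntegrable g volume τ x := my_intInt g hg hloc hτ (hp.trans hx.1)
    have hiy : IntervalIntegrable g volume τ y := my_intInt g hg hloc hτ (hp.trans hy.1)
    have hixy : IntervalIntegrable g volume y x := my_intInt g hg hloc (hp.trans hy.1) (hp.trans hx.1)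
    have hsplit : (∫ u in τ..y, g u) + (∫ u in y..x, g u) = ∫ u in τ..x, g u :=
      integral_add_adjacent_intervals hiy hixy
    simp only [Real.dist_eq]
    rw [← hsplit]
    have : |(∫ u in y..x, g u)| ≤ M * |x - y| := by
      have := intervalIntegral.norm_integral_le_of_norm_le_const (C := M) (f := g)
        (a := y) (b := x) ?_
      · simpa [Real.norm_eq_abs] using this
      · intro s hs
        have : s ∈ Icc (0:ℝ) (max q τ) := by
          rcases hs with ⟨h1, h2⟩
          refine ⟨le_of_lt (lt_of_le_of_lt (le_min (hp.trans hy.1) (hp.trans hx.1)) h1), ?_⟩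
          exact h2.trans (le_max_of_le_left (max_le hy.2 hx.2))
        simpa [Real.norm_eq_abs] using hM s this
    calc |(∫ u in τ..y, g u) + (∫ u in y..x, g u) - (∫ u in τ..y, g u)| = |(∫ u in y..x, g u)| := by ring_nf
      _ ≤ M * |x - y| := this
  exact (LipschitzOnWith.of_dist_le_mul (K := M.toNNReal) (by
    intro x hx y hy
    refine le_trans (key x hx y hy) (mul_le_mul_of_nonneg_right ?_ dist_nonneg)
    simp [Real.coe_toNNReal', le_max_left])).continuousOn

lemma my_pow_gap (α M u v : ℝ) (hα : α ∈ Ioo (0:ℝ) 1) (hM : 0 < M)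
    (hu : 0 ≤ u) (huv : u ≤ v) (hv : v ≤ M) :
    α * M ^ (α - 1) * (v - u) ≤ v ^ α - u ^ α := by
  obtain ⟨hα0, hα1⟩ := hα
  rcases eq_or_lt_of_le huv with rfl | hlt
  · simp
  have hv0 : 0 < v := lt_of_le_of_lt hu hlt
  have hMv : M ^ (α - 1) ≤ v ^ (α - 1) :=
    Real.rpow_le_rpow_of_nonpos hv0 hv (by linarith)
  have hMpos : (0:ℝ) < M ^ (α - 1) := Real.rpow_pos_of_pos hM _
  rcases eq_or_lt_of_le hu with rfl | hu0
  · rw [Real.zero_rpow (ne_of_gt hα0), sub_zero, sub_zero]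
    have hsplit : v ^ α = v ^ (α - 1) * v := by
      rw [← Real.rpow_add_one (ne_of_gt hv0)]; norm_num
    rw [hsplit]
    nlinarith [mul_le_mul_of_nonneg_right hMv (le_of_lt hv0), mul_pos hMpos hv0]
  · obtain ⟨ξ, hξ, hslope⟩ := exists_hasDerivAt_eq_slope (fun z => z ^ α)
      (fun z => α * z ^ (α - 1)) hlt
      (fun z hz => (Real.continuousAt_rpow_const z α
        (Or.inl (ne_of_gt (lt_of_lt_of_le hu0 hz.1)))).continuousWithinAt)
      (fun z hz => Real.hasDerivAt_rpow_const (Or.inl (ne_of_gt (lt_of_lt_of_le hu0 hz.1.le))))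
    have hξ0 : 0 < ξ := lt_trans hu0 hξ.1
    have hMξ : M ^ (α - 1) ≤ ξ ^ (α - 1) :=
      Real.rpow_le_rpow_of_nonpos hξ0 (le_trans hξ.2.le hv) (by linarith)
    have heq : v ^ α - u ^ α = α * ξ ^ (α - 1) * (v - u) := by
      have hslope' : α * ξ ^ (α - 1) = (v ^ α - u ^ α) / (v - u) := hslope
      rw [eq_div_iff (ne_of_gt (by linarith : (0:ℝ) < v - u))] at hslope'
      linarith
    rw [heq]
    have h1 : α * M ^ (α - 1) ≤ α * ξ ^ (α - 1) :=
      mul_le_mul_of_nonneg_left hMξ hα0.le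
    exact mul_le_mul_of_nonneg_right h1 (by linarith)

lemma my_gain (α cp cm : ℝ) (hα : α ∈ Ioo (0:ℝ) 1) (hcp : 0 < cp) (hcm : 0 < cm)
    (M x y : ℝ) (hM : 0 < M) (hx : -M ≤ x) (hxy : x ≤ y) (hy : y ≤ M) :
    min cp cm * min α 2⁻¹ * ((y - x) * M ^ (α - 1)) ≤
      (if 0 ≤ y then cp else -cm) * |y| ^ α - (if 0 ≤ x then cp else -cm) * |x| ^ α := by
  obtain ⟨hα0, hα1⟩ := hα
  have hMpos : (0:ℝ) < M ^ (α - 1) := Real.rpow_pos_of_pos hM _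
  have hminc : 0 < min cp cm := lt_min hcp hcm
  have hminα : 0 < min α 2⁻¹ := lt_min hα0 (by norm_num)
  have hgap0 : 0 ≤ y - x := by linarith
  have hbase : 0 ≤ (y - x) * M ^ (α - 1) := mul_nonneg hgap0 hMpos.le
  by_cases h0x : 0 ≤ x
  · have h0y : 0 ≤ y := le_trans h0x hxy
    rw [if_pos h0x, if_pos h0y, abs_of_nonneg h0x, abs_of_nonneg h0y]
    have key := my_pow_gap α M x y ⟨hα0, hα1⟩ hM h0x hxy hy
    calc min cp cm * min α 2⁻¹ * ((y - x) * M ^ (α - 1))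
        ≤ cp * α * ((y - x) * M ^ (α - 1)) := by
          refine mul_le_mul_of_nonneg_right ?_ hbase
          exact mul_le_mul (min_le_left _ _) (min_le_left _ _) hminα.le hcp.le
      _ = cp * (α * M ^ (α - 1) * (y - x)) := by ring
      _ ≤ cp * (y ^ α - x ^ α) := mul_le_mul_of_nonneg_left key hcp.le
      _ = cp * y ^ α - cp * x ^ α := by ring
  · by_cases h0y : 0 ≤ y
    · rw [if_pos h0y, if_neg h0x]
      push_neg at h0x
      have hyx2 : 0 < y - x := by linarith
      rw [abs_of_neg h0x, abs_of_nonneg h0y]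
      have hrw : cp * y ^ α - -cm * (-x) ^ α = cp * y ^ α + cm * (-x) ^ α := by ring
      rw [hrw]
      set g : ℝ := (y - x) / 2 with hg
      have hg0 : 0 < g := by simp [hg]; linarith
      have hm0 : g ≤ max y (-x) := by
        rcases le_total y (-x) with h | h
        · rw [max_eq_right h]; simp [hg]; linarith
        · rw [max_eq_left h]; simp [hg]; linarith
      have hmax_le : max y (-x) ^ α ≤ y ^ α + (-x) ^ α := by
        rcases le_total y (-x) with h | h
        · rw [max_eq_right h]
          have : 0 ≤ y ^ α := Real.rpow_nonneg h0y _
          linarith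
        · rw [max_eq_left h]
          have : 0 ≤ (-x) ^ α := Real.rpow_nonneg (by linarith) _
          linarith
      have hhalf : g ^ α ≤ max y (-x) ^ α :=
        Real.rpow_le_rpow hg0.le hm0 hα0.le
      have hsplit : g ^ α = g ^ (α - 1) * g := by
        rw [← Real.rpow_add_one (ne_of_gt hg0)]; norm_num
      have hMgap : M ^ (α - 1) ≤ g ^ (α - 1) :=
        Real.rpow_le_rpow_of_nonpos hg0 (by simp [hg]; linarith) (by linarith)
      calc min cp cm * min α 2⁻¹ * ((y - x) * M ^ (α - 1))
          ≤ min cp cm * 2⁻¹ * ((y - x) * M ^ (α - 1)) := by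
            refine mul_le_mul_of_nonneg_right
              (mul_le_mul_of_nonneg_left (min_le_right _ _) hminc.le) hbase
        _ = (min cp cm * g) * M ^ (α - 1) := by rw [hg]; ring
        _ ≤ (min cp cm * g) * g ^ (α - 1) :=
            mul_le_mul_of_nonneg_left hMgap (mul_nonneg hminc.le hg0.le)
        _ = min cp cm * g ^ α := by rw [hsplit]; ring
        _ ≤ min cp cm * (y ^ α + (-x) ^ α) :=
            mul_le_mul_of_nonneg_left (hhalf.trans hmax_le) hminc.le
        _ ≤ cp * y ^ α + cm * (-x) ^ α := by
            have hy' : 0 ≤ y ^ α := Real.rpow_nonneg h0y _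
            have hx' : 0 ≤ (-x) ^ α := Real.rpow_nonneg (by linarith) _
            have h1 := min_le_left cp cm
            have h2 := min_le_right cp cm
            nlinarith
    · push_neg at h0x h0y
      rw [if_neg (not_le.2 h0y), if_neg (not_le.2 h0x), abs_of_neg h0y, abs_of_neg h0x]
      have key := my_pow_gap α M (-y) (-x) ⟨hα0, hα1⟩ hM (by linarith) (by linarith) (by linarith)
      have hrw : -cm * (-y) ^ α - -cm * (-x) ^ α = cm * ((-x) ^ α - (-y) ^ α) := by ring
      rw [hrw]
      calc min cp cm * min α 2⁻¹ * ((y - x) * M ^ (α - 1))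
          ≤ cm * α * ((y - x) * M ^ (α - 1)) := by
            refine mul_le_mul_of_nonneg_right ?_ hbase
            exact mul_le_mul (min_le_right _ _) (min_le_left _ _) hminα.le hcm.le
        _ = cm * (α * M ^ (α - 1) * (-x - -y)) := by ring
        _ ≤ cm * ((-x) ^ α - (-y) ^ α) := mul_le_mul_of_nonneg_left key hcm.le

lemma my_ftc (A b e p q : ℝ) (hA : 0 < A) (hb : 0 < b) (he : 1 < e) (hp : 0 ≤ p) (hpq : p ≤ q) :
    ∫ r in p..q, b * e * (A + b * r) ^ (e - 1) = (A + b * q) ^ e - (A + b * p) ^ e := by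
  have hpos : ∀ r ∈ uIcc p q, 0 < A + b * r := by
    intro r hr
    have : min p q ≤ r := hr.1
    have hr0 : 0 ≤ r := le_trans (le_min hp (hp.trans hpq)) this
    positivity
  have hderiv : ∀ r ∈ uIcc p q,
      HasDerivAt (fun z => (A + b * z) ^ e) (b * e * (A + b * r) ^ (e - 1)) r := by
    intro r hr
    have hin : HasDerivAt (fun z => A + b * z) b r := by
      simpa using ((hasDerivAt_id r).const_mul b).const_add A
    have := hin.rpow_const (p := e) (Or.inl (ne_of_gt (hpos r hr)))
    simpa [mul_comm, mul_assoc, mul_left_comm] using this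
  have hcont : ContinuousOn (fun r => b * e * (A + b * r) ^ (e - 1)) (uIcc p q) := by
    refine ContinuousOn.mul continuousOn_const ?_
    refine ContinuousOn.rpow_const ?_ (fun r hr => Or.inl (ne_of_gt (hpos r hr)))
    exact (continuous_const.add (continuous_const.mul continuous_id)).continuousOn
  exact integral_eq_sub_of_hasDerivAt hderiv (hcont.intervalIntegrable)

lemma my_ftcZ (T c k q : ℝ) (hT : 0 < T) (hc : 0 < c) (hk : 0 < k) (hq : T ≤ q) :
    ∫ s in T..q, k * (c * (s / T) ^ k) / s = c * (q / T) ^ k - c := by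
  have hpos : ∀ s ∈ uIcc T q, 0 < s := by
    intro s hs
    have : min T q ≤ s := hs.1
    have := le_min (le_refl T) hq
    linarith [le_trans (le_min (le_refl T) hq) hs.1]
  have hderiv : ∀ s ∈ uIcc T q,
      HasDerivAt (fun z => c * (z / T) ^ k) (k * (c * (s / T) ^ k) / s) s := by
    intro s hs
    have hs0 : 0 < s := hpos s hs
    have hin : HasDerivAt (fun z => z / T) (1 / T) s := by
      simpa using (hasDerivAt_id s).div_const T
    have hrpow := (hin.rpow_const (p := k) (Or.inl (ne_of_gt (div_pos hs0 hT))))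
    have h2 := hrpow.const_mul c
    have heq : c * (1 / T * k * (s / T) ^ (k - 1)) = k * (c * (s / T) ^ k) / s := by
      have hsplit : (s / T) ^ k = (s / T) ^ (k - 1) * (s / T) := by
        rw [← Real.rpow_add_one (ne_of_gt (div_pos hs0 hT))]; norm_num
      rw [hsplit]
      field_simp
    rw [heq] at h2
    exact h2
  have hcont : ContinuousOn (fun s => k * (c * (s / T) ^ k) / s) (uIcc T q) := by
    refine ContinuousOn.div ?_ continuousOn_id (fun s hs => ne_of_gt (hpos s hs))
    refine ContinuousOn.mul continuousOn_const (ContinuousOn.mul continuousOn_const ?_)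
    refine ContinuousOn.rpow_const ?_ (fun s hs => Or.inl (ne_of_gt (div_pos (hpos s hs) hT)))
    exact (continuous_id.div_const T).continuousOn
  have := integral_eq_sub_of_hasDerivAt hderiv (hcont.intervalIntegrable)
  rw [this]
  rw [div_self (ne_of_gt hT), Real.one_rpow]
  ring

set_option maxHeartbeats 1000000

lemma my_measg (α cp cm : ℝ) (hα0 : 0 < α) (hα1 : α < 1) (X : ℝ → ℝ) (hXm : Measurable X) :
    Measurable (fun u => (if 0 ≤ X u then cp else -cm) * |X u| ^ α) := by
  have hφ : Continuous fun v : ℝ => v ^ α :=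
    continuous_iff_continuousAt.2 (fun x => Real.continuousAt_rpow_const x α (Or.inr hα0.le))
  refine Measurable.mul ?_ (hφ.measurable.comp hXm.abs)
  exact Measurable.ite (measurableSet_le measurable_const hXm) measurable_const measurable_const

lemma my_locg (α cp cm : ℝ) (hα0 : 0 < α) (hα1 : α < 1) (hcp : 0 < cp) (hcm : 0 < cm)
    (X : ℝ → ℝ) (hXloc : ∀ T, ∃ M, ∀ s ∈ Icc (0:ℝ) T, |X s| ≤ M) :
    ∀ T, ∃ M, ∀ s ∈ Icc (0:ℝ) T, |(if 0 ≤ X s then cp else -cm) * |X s| ^ α| ≤ M := by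
  intro T
  obtain ⟨M, hM⟩ := hXloc T
  refine ⟨max cp cm * (max M 0) ^ α, fun s hs => ?_⟩
  rw [abs_mul]
  have h1 : |if 0 ≤ X s then cp else -cm| ≤ max cp cm := by
    split
    · rw [abs_of_pos hcp]; exact le_max_left _ _
    · rw [abs_neg, abs_of_pos hcm]; exact le_max_right _ _
  have h2 : |(|X s| ^ α)| ≤ (max M 0) ^ α := by
    rw [abs_of_nonneg (Real.rpow_nonneg (abs_nonneg _) _)]
    exact Real.rpow_le_rpow (abs_nonneg _) ((hM s hs).trans (le_max_left _ _)) hα0.le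
  exact mul_le_mul h1 h2 (abs_nonneg _) (le_trans hcp.le (le_max_left _ _))

lemma my_escape (α cp cm : ℝ) (hα : α ∈ Ioo (0:ℝ) 1) (hcp : 0 < cp) (hcm : 0 < cm)
    (τ : ℝ) (hτ : 0 ≤ τ) (X Δ : ℝ → ℝ)
    (hXm : Measurable X) (hXloc : ∀ T, ∃ M, ∀ s ∈ Icc (0:ℝ) T, |X s| ≤ M)
    (hint : ∀ s, τ ≤ s →
      X s = X τ + (∫ u in τ..s, (if 0 ≤ X u then cp else -cm) * |X u| ^ α) + Δ s)
    (D ee : ℝ) (hD : 0 ≤ D) (hee0 : 0 ≤ ee)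
    (hee : ee ≤ (cp * (2:ℝ) ^ (-α) / (1 / (1 - α))) ^ (1 / (1 - α)) / 4)
    (hΔ : ∀ s, τ ≤ s → |Δ s| ≤ D + ee * (s - τ) ^ (1 / (1 - α)))
    (hstart : 8 * D + 1 ≤ X τ) :
    Tendsto X atTop atTop := by
  obtain ⟨hα0, hα1⟩ := hα
  have h1α : (0:ℝ) < 1 - α := by linarith
  set β : ℝ := 1 / (1 - α) with hβdef
  have hβ0 : 0 < β := by positivity
  have hβ1 : 1 < β := by rw [hβdef, lt_div_iff₀ h1α]; linarith
  have hαβ : β * α = β - 1 := by rw [hβdef]; field_simp; ring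
  set b : ℝ := cp * (2:ℝ) ^ (-α) / β with hbdef
  have h2α : (0:ℝ) < (2:ℝ) ^ (-α) := Real.rpow_pos_of_pos (by norm_num) _
  have hb0 : 0 < b := by rw [hbdef]; positivity
  set L : ℝ := 8 * D + 1 with hLdef
  have hL1 : 1 ≤ L := by rw [hLdef]; linarith
  have hL0 : 0 < L := by linarith
  set m : ℝ := (L / 2) ^ (1 - α) with hmdef
  have hm0 : 0 < m := Real.rpow_pos_of_pos (by linarith) _
  set ψ : ℝ → ℝ := fun u => (m + b * u) ^ β with hψdef
  have hmL : m ^ β = L / 2 := by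
    rw [hmdef, ← Real.rpow_mul (by linarith : (0:ℝ) ≤ L / 2)]
    have : (1 - α) * β = 1 := by rw [hβdef]; field_simp
    rw [this, Real.rpow_one]
  have hψ0 : ψ 0 = L / 2 := by simp only [hψdef, mul_zero, add_zero]; exact hmL
  have noise_le : ∀ u, 0 ≤ u → D + ee * u ^ β ≤ ψ u / 2 := by
    intro u hu
    have hbu : 0 ≤ b * u := mul_nonneg hb0.le hu
    have hmψ : m ^ β ≤ ψ u := by
      simp only [hψdef]
      exact Real.rpow_le_rpow hm0.le (by linarith) hβ0.le
    have hbψ : (b * u) ^ β ≤ ψ u := by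
      simp only [hψdef]
      exact Real.rpow_le_rpow hbu (by linarith) hβ0.le
    have heeu : ee * u ^ β ≤ (b * u) ^ β / 4 := by
      rw [Real.mul_rpow hb0.le hu]
      have hu' : 0 ≤ u ^ β := Real.rpow_nonneg hu _
      have : ee ≤ b ^ β / 4 := hee
      nlinarith
    have hD' : D ≤ m ^ β / 4 := by rw [hmL]; rw [hLdef]; linarith
    linarith
  set g : ℝ → ℝ := fun u => (if 0 ≤ X u then cp else -cm) * |X u| ^ α with hgdef
  have hgm : Measurable g := my_measg α cp cm hα0 hα1 X hXm
  have hgloc : ∀ T, ∃ M, ∀ s ∈ Icc (0:ℝ) T, |g s| ≤ M :=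
    my_locg α cp cm hα0 hα1 hcp hcm X hXloc
  set W : ℝ → ℝ := fun u => X (τ + u) - Δ (τ + u) with hWdef
  have hWeq : ∀ u, 0 ≤ u → W u = X τ + ∫ s in τ..(τ + u), g s := by
    intro u hu
    have h := hint (τ + u) (by linarith)
    simp only [hWdef]
    linarith
  have contW : ∀ q, 0 ≤ q → ContinuousOn W (Icc 0 q) := by
    intro q hq
    have base : ContinuousOn (fun s => ∫ u in τ..s, g u) (Icc τ (τ + q)) :=
      my_contPrim g hgm hgloc τ hτ hτ
    have hF : ContinuousOn (fun s => X τ + ∫ u in τ..s, g u) (Icc τ (τ + q)) :=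
      continuousOn_const.add base
    have hcomp : ContinuousOn ((fun s => X τ + ∫ u in τ..s, g u) ∘ (fun u => τ + u)) (Icc 0 q) := by
      refine hF.comp ((continuous_const.add continuous_id).continuousOn) ?_
      refine fun u hu => mem_Icc.2 ⟨?_, ?_⟩ <;> simp <;> linarith [hu.1, hu.2]
    refine hcomp.congr ?_
    intro u hu
    exact hWeq u hu.1
  have contψ : ∀ q, (0:ℝ) ≤ q → ContinuousOn ψ (Icc 0 q) := by
    intro q hq
    have : Continuous ψ := by
      simp only [hψdef]
      exact Continuous.rpow_const (continuous_const.add (continuous_const.mul continuous_id))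
        (fun x => Or.inr hβ0.le)
    exact this.continuousOn
  have step : ∀ q, 0 ≤ q → (∀ r, 0 ≤ r → r < q → ψ r ≤ W r) → ψ q + L / 2 ≤ W q := by
    intro q hq hbel
    have hXlow : ∀ r, 0 ≤ r → r < q → ψ r / 2 ≤ X (τ + r) := by
      intro r h0r hrq
      have hw : W r = X (τ + r) - Δ (τ + r) := rfl
      have hd := hΔ (τ + r) (by linarith)
      rw [show τ + r - τ = r from by ring] at hd
      have hab := abs_le.1 hd
      have hn := noise_le r h0r
      have hb2 := hbel r h0r hrq
      linarith [hab.1, hab.2]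
    have hglow : ∀ s, τ ≤ s → s < τ + q → cp * (ψ (s - τ) / 2) ^ α ≤ g s := by
      intro s h1 h2
      have h0r : 0 ≤ s - τ := by linarith
      have hx := hXlow (s - τ) h0r (by linarith)
      rw [show τ + (s - τ) = s from by ring] at hx
      have hψpos : 0 < ψ (s - τ) := by
        simp only [hψdef]
        exact Real.rpow_pos_of_pos (by nlinarith [mul_nonneg hb0.le h0r]) _
      have hX0 : 0 ≤ X s := by linarith
      show cp * (ψ (s - τ) / 2) ^ α ≤ (if 0 ≤ X s then cp else -cm) * |X s| ^ α
      rw [if_pos hX0, abs_of_nonneg hX0]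
      exact mul_le_mul_of_nonneg_left (Real.rpow_le_rpow (by linarith) hx hα0.le) hcp.le
    have hgint : IntervalIntegrable g volume τ (τ + q) := my_intInt g hgm hgloc hτ (by linarith)
    have hcont2 : Continuous fun s => cp * (ψ (s - τ) / 2) ^ α := by
      have hψc : Continuous ψ := by
        simp only [hψdef]
        exact Continuous.rpow_const (continuous_const.add (continuous_const.mul continuous_id))
          (fun x => Or.inr hβ0.le)
      refine continuous_const.mul ?_
      refine Continuous.rpow_const ?_ (fun x => Or.inr hα0.le)
      exact (hψc.comp (continuous_id.sub continuous_const)).div_const 2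
    have hint2 : IntervalIntegrable (fun s => cp * (ψ (s - τ) / 2) ^ α) volume τ (τ + q) :=
      hcont2.intervalIntegrable _ _
    have hae : (fun s => cp * (ψ (s - τ) / 2) ^ α) ≤ᵐ[volume.restrict (Icc τ (τ + q))] g := by
      have h1 : ∀ᵐ s ∂(volume.restrict (Icc τ (τ + q))), s ∈ Icc τ (τ + q) :=
        ae_restrict_mem measurableSet_Icc
      have h2 : ∀ᵐ s : ℝ, s ≠ τ + q := by
        rw [ae_iff]
        have : {a : ℝ | ¬a ≠ τ + q} = {τ + q} := by ext a; simp
        rw [this]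
        exact measure_singleton _
      filter_upwards [h1, ae_restrict_of_ae h2] with s hs hne
      exact hglow s hs.1 (lt_of_le_of_ne hs.2 hne)
    have hmono := intervalIntegral.integral_mono_ae_restrict (by linarith : τ ≤ τ + q)
      hint2 hgint hae
    have hcomp : (∫ s in τ..(τ + q), cp * (ψ (s - τ) / 2) ^ α)
        = ∫ r in (0:ℝ)..q, cp * (ψ r / 2) ^ α := by
      have := intervalIntegral.integral_comp_sub_right (a := τ) (b := τ + q)
        (fun r => cp * (ψ r / 2) ^ α) τ
      simpa using this
    have hftc : (∫ r in (0:ℝ)..q, cp * (ψ r / 2) ^ α) = ψ q - L / 2 := by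
      have hcg : EqOn (fun r => cp * (ψ r / 2) ^ α)
          (fun r => b * β * (m + b * r) ^ (β - 1)) (uIcc 0 q) := by
        intro r hr
        rw [uIcc_of_le hq] at hr
        have h0r : 0 ≤ r := hr.1
        have hpos : 0 < m + b * r := by nlinarith [mul_nonneg hb0.le h0r]
        simp only [hψdef]
        rw [Real.div_rpow (Real.rpow_nonneg hpos.le β) (by norm_num : (0:ℝ) ≤ 2)]
        rw [← Real.rpow_mul hpos.le, hαβ]
        have hbβ : b * β = cp * (2:ℝ) ^ (-α) := by
          rw [hbdef]; field_simp
        rw [hbβ, Real.rpow_neg (by norm_num : (0:ℝ) ≤ 2)]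
        field_simp
      rw [intervalIntegral.integral_congr hcg,
        my_ftc m b β 0 q hm0 hb0 hβ1 le_rfl hq]
      simp only [hψdef, mul_zero, add_zero]
      rw [hmL]
    have hWq := hWeq q hq
    rw [hWq]
    rw [hcomp, hftc] at hmono
    linarith
  have hFC := my_FC 0 (L / 2) (by linarith) W ψ contW contψ step
  have final : ∀ s, τ ≤ s → (b * (s - τ)) ^ β / 2 ≤ X s := by
    intro s hs
    have h0 : 0 ≤ s - τ := by linarith
    have h1 := hFC (s - τ) h0
    have hw : W (s - τ) = X s - Δ s := by
      simp only [hWdef]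
      rw [show τ + (s - τ) = s from by ring]
    have hd := abs_le.1 (hΔ s hs)
    have hn := noise_le (s - τ) h0
    have hψb : (b * (s - τ)) ^ β ≤ ψ (s - τ) := by
      simp only [hψdef]
      exact Real.rpow_le_rpow (mul_nonneg hb0.le h0) (by linarith) hβ0.le
    linarith [hd.1, hd.2]
  have htends : Tendsto (fun s => (b * (s - τ)) ^ β / 2) atTop atTop := by
    apply Tendsto.atTop_div_const (by norm_num : (0:ℝ) < 2)
    have hlin : Tendsto (fun s : ℝ => b * (s - τ)) atTop atTop := by
      apply Tendsto.const_mul_atTop hb0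
      simpa [sub_eq_add_neg] using tendsto_atTop_add_const_right atTop (-τ) tendsto_id
    exact (tendsto_rpow_atTop hβ0).comp hlin
  refine tendsto_atTop_mono' atTop ?_ htends
  filter_upwards [eventually_ge_atTop τ] with s hs
  exact final s hs
lemma my_contra (C2 ε bV κ T1 d s0 z w l : ℝ)
    (hC2 : 0 < C2) (hε : 0 < ε) (hbV : 0 < bV) (hd : 0 < d)
    (hT1 : 0 < T1) (hT1s : T1 ≤ s0) (hs01 : 1 ≤ s0)
    (hκ : bV + 1 ≤ κ)
    (hs0big : 8 * C2 * ε * T1 ^ κ / d ≤ s0)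
    (hz : z = d / 2 * (s0 / T1) ^ κ)
    (h1 : z ≤ w) (h2 : w < 2 * l) (h3 : l ≤ 2 * C2 * ε * s0 ^ bV) : False := by
  have hs00 : (0:ℝ) < s0 := by linarith
  have hT1κ : 0 < T1 ^ κ := Real.rpow_pos_of_pos hT1 _
  have hsbv : 0 < s0 ^ bV := Real.rpow_pos_of_pos hs00 _
  have hstep1 : s0 ≤ s0 ^ (κ - bV) := by
    have := Real.rpow_le_rpow_of_exponent_le hs01 (by linarith : (1:ℝ) ≤ κ - bV)
    rwa [Real.rpow_one] at this
  have hs0κ : s0 ^ κ = s0 ^ bV * s0 ^ (κ - bV) := by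
    rw [← Real.rpow_add hs00]
    congr 1
    ring
  have hzeq : z = d / 2 * (s0 ^ bV * s0 ^ (κ - bV)) / T1 ^ κ := by
    rw [hz, Real.div_rpow hs00.le hT1.le, hs0κ]
    ring
  have e1 : 8 * C2 * ε * T1 ^ κ ≤ d * s0 := by
    rw [div_le_iff₀ hd] at hs0big
    nlinarith
  have h0 : (0:ℝ) ≤ d / 2 * s0 ^ bV := mul_nonneg (by linarith) hsbv.le
  have hA := mul_le_mul_of_nonneg_left hstep1 h0
  have hB := mul_le_mul_of_nonneg_right e1 hsbv.le
  have hzlow : 4 * C2 * ε * s0 ^ bV ≤ z := by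
    rw [hzeq, le_div_iff₀ hT1κ]
    nlinarith
  nlinarith


/-- Dichotomy for `α ∈ (0,1)`: if the driving path `B` has increments after a
sequence of times `tₙ → ∞` (with `t_{n+1} − tₙ ≥ 1`) dominated by a nonnegative
function `h(t) = o(t^{1/(1−α)})`, then for any two solutions with initial
values `x₁ < x₂`, either `X₁ → −∞` or `X₂ → +∞`. -/
theorem stmt16 (α cplus cminus x₁ x₂ : ℝ) (hα : α ∈ Set.Ioo (0:ℝ) 1)
    (hcp : 0 < cplus) (hcm : 0 < cminus) (hx : x₁ < x₂)
    (B h : ℝ → ℝ) (t : ℕ → ℝ)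
    (hBmeas : Measurable B)
    (hBloc : ∀ T : ℝ, ∃ M : ℝ, ∀ s ∈ Icc (0:ℝ) T, |B s| ≤ M)
    (hh_nonneg : ∀ s : ℝ, 0 ≤ s → 0 ≤ h s)
    (hh : Tendsto (fun s : ℝ => h s / s ^ (1 / (1 - α))) atTop (nhds 0))
    (ht_mono : StrictMono t)
    (ht_gap : ∀ n : ℕ, t n + 1 ≤ t (n + 1))
    (ht_lim : Tendsto t atTop atTop)
    (hB_incr : ∀ n : ℕ, ∀ s : ℝ, t n ≤ s → |B s - B (t n)| ≤ h (s - t n))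
    (X₁ X₂ : ℝ → ℝ)
    (hX₁meas : Measurable X₁) (hX₂meas : Measurable X₂)
    (hX₁loc : ∀ T : ℝ, ∃ M : ℝ, ∀ s ∈ Icc (0:ℝ) T, |X₁ s| ≤ M)
    (hX₂loc : ∀ T : ℝ, ∃ M : ℝ, ∀ s ∈ Icc (0:ℝ) T, |X₂ s| ≤ M)
    (hX₁eq : ∀ s : ℝ, 0 ≤ s →
      X₁ s = x₁ + (∫ u in (0:ℝ)..s, (if 0 ≤ X₁ u then cplus else -cminus) * |X₁ u| ^ α) + B s)
    (hX₂eq : ∀ s : ℝ, 0 ≤ s →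
      X₂ s = x₂ + (∫ u in (0:ℝ)..s, (if 0 ≤ X₂ u then cplus else -cminus) * |X₂ u| ^ α) + B s) :
    Tendsto X₁ atTop atBot ∨ Tendsto X₂ atTop atTop := by
  classical
  obtain ⟨hα0, hα1⟩ := hα
  have h1α : (0:ℝ) < 1 - α := by linarith
  set bV : ℝ := 1 / (1 - α) with hbV
  have hbV0 : 0 < bV := by positivity
  have hbV1 : 1 < bV := by rw [hbV, lt_div_iff₀ h1α]; linarith
  have h2a : (0:ℝ) < (2:ℝ) ^ (-α) := Real.rpow_pos_of_pos (by norm_num) _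
  have h2b : (0:ℝ) < (2:ℝ) ^ bV := Real.rpow_pos_of_pos (by norm_num) _
  set cmn : ℝ := min cplus cminus with hcmn
  have hcmn0 : 0 < cmn := lt_min hcp hcm
  set bmin : ℝ := cmn * (2:ℝ) ^ (-α) / bV with hbmin
  have hbmin0 : 0 < bmin := by rw [hbmin]; positivity
  set kk : ℝ := cmn * min α 2⁻¹ with hkkdef
  have hkk0 : 0 < kk := by
    rw [hkkdef]; exact mul_pos hcmn0 (lt_min hα0 (by norm_num))
  set C2 : ℝ := 8 * (1 + (2:ℝ) ^ bV) with hC2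
  have hC20 : 0 < C2 := by rw [hC2]; positivity
  set r0 : ℝ := ((bV + 1) / kk) ^ (1 / (α - 1)) with hr0
  have hbk0 : (0:ℝ) < (bV + 1) / kk := by positivity
  have hr00 : 0 < r0 := Real.rpow_pos_of_pos hbk0 _
  set ε : ℝ := min (bmin ^ bV / (4 * (2:ℝ) ^ bV)) (r0 / (2 * C2)) with hεdef
  have hbmb : (0:ℝ) < bmin ^ bV := Real.rpow_pos_of_pos hbmin0 _
  have hε0 : 0 < ε := lt_min (by positivity) (by positivity)
  set ee : ℝ := ε * (2:ℝ) ^ bV with heedef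
  have hee0 : (0:ℝ) ≤ ee := by rw [heedef]; positivity
  have heeA : ee ≤ bmin ^ bV / 4 := by
    have h1 : ε ≤ bmin ^ bV / (4 * 2 ^ bV) := by rw [hεdef]; exact min_le_left _ _
    rw [heedef]
    calc ε * 2 ^ bV ≤ bmin ^ bV / (4 * 2 ^ bV) * 2 ^ bV :=
          mul_le_mul_of_nonneg_right h1 h2b.le
      _ = bmin ^ bV / 4 := by field_simp
  have heeP : ∀ c' : ℝ, 0 < c' → cmn ≤ c' → ee ≤ (c' * (2:ℝ) ^ (-α) / bV) ^ bV / 4 := by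
    intro c' hc' hle
    have hbase : bmin ≤ c' * (2:ℝ) ^ (-α) / bV := by
      rw [hbmin]
      gcongr
    have h2 : bmin ^ bV ≤ (c' * (2:ℝ) ^ (-α) / bV) ^ bV :=
      Real.rpow_le_rpow hbmin0.le hbase hbV0.le
    linarith
  -- K from the limit hypothesis
  have hev : ∀ᶠ u in atTop, h u / u ^ bV < ε := hh.eventually_lt_const hε0
  obtain ⟨K₀, hK₀⟩ := eventually_atTop.1 hev
  set K : ℝ := max K₀ 1 with hKdef
  have hK1 : (1:ℝ) ≤ K := by rw [hKdef]; exact le_max_right _ _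
  have hhK : ∀ u : ℝ, K ≤ u → h u ≤ ε * u ^ bV := by
    intro u hu
    have hu0 : (0:ℝ) < u := by linarith
    have h1 := hK₀ u (le_trans (by rw [hKdef]; exact le_max_left _ _) hu)
    have hupos : 0 < u ^ bV := Real.rpow_pos_of_pos hu0 _
    rw [div_lt_iff₀ hupos] at h1
    linarith
  obtain ⟨n₀, hn₀⟩ := (ht_lim.eventually_ge_atTop 0).exists
  set t0 : ℝ := t n₀ with ht0def
  have ht00 : (0:ℝ) ≤ t0 := hn₀
  set C0 : ℝ := |B t0| with hC0
  have hC00 : (0:ℝ) ≤ C0 := abs_nonneg _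
  set T0 : ℝ := t0 + K with hT0
  have hT01 : (1:ℝ) ≤ T0 := by rw [hT0]; linarith
  clear_value bV cmn bmin kk C2 r0 ε ee K t0 C0 T0
  have hBg : ∀ s, T0 ≤ s → |B s| ≤ C0 + ε * s ^ bV := by
    intro s hs
    have h1 : t0 ≤ s := by rw [hT0] at hs; linarith
    rw [ht0def] at h1
    have h2 := hB_incr n₀ s h1
    have h3 : K ≤ s - t0 := by rw [hT0] at hs; linarith
    have h4 := hhK _ h3
    have h5 : (s - t0) ^ bV ≤ s ^ bV :=
      Real.rpow_le_rpow (by linarith) (by linarith) hbV0.le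
    have h6 := mul_le_mul_of_nonneg_left h5 hε0.le
    have h7 := abs_sub_abs_le_abs_sub (B s) (B t0)
    rw [← ht0def] at h2
    linarith
  set Df : ℝ → ℝ := fun τ => 2 * C0 + ε * (1 + (2:ℝ) ^ bV) * τ ^ bV with hDfdef
  clear_value Df
  have hDf0 : ∀ τ, T0 ≤ τ → 0 ≤ Df τ := by
    intro τ hτ
    have hτ0 : (0:ℝ) ≤ τ := by linarith
    have hτbv : (0:ℝ) ≤ τ ^ bV := Real.rpow_nonneg hτ0 _
    simp only [hDfdef]
    have hfac : (0:ℝ) ≤ ε * (1 + (2:ℝ) ^ bV) * τ ^ bV :=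
      mul_nonneg (mul_nonneg hε0.le (by linarith only [h2b])) hτbv
    linarith only [hC00, hfac]
  have hnoise : ∀ τ, T0 ≤ τ → ∀ s, τ ≤ s → |B s - B τ| ≤ Df τ + ee * (s - τ) ^ bV := by
    intro τ hτ s hs
    have hτ0 : (0:ℝ) < τ := by linarith
    have h1 := hBg s (by linarith)
    have h2 := hBg τ hτ
    have habs : |B s - B τ| ≤ |B s| + |B τ| := abs_sub _ _
    have hmax : s ≤ 2 * max (s - τ) τ := by
      rcases le_total (s - τ) τ with hc | hc
      · rw [max_eq_right hc]; linarith
      · rw [max_eq_left hc]; linarith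
    have hmax0 : (0:ℝ) ≤ max (s - τ) τ := le_trans hτ0.le (le_max_right _ _)
    have e1 : s ^ bV ≤ (2 * max (s - τ) τ) ^ bV :=
      Real.rpow_le_rpow (by linarith) hmax hbV0.le
    have e2 : (2 * max (s - τ) τ) ^ bV = 2 ^ bV * (max (s - τ) τ) ^ bV :=
      Real.mul_rpow (by norm_num) hmax0
    have e3 : (max (s - τ) τ) ^ bV ≤ (s - τ) ^ bV + τ ^ bV := by
      rcases le_total (s - τ) τ with hc | hc
      · rw [max_eq_right hc]
        have : (0:ℝ) ≤ (s - τ) ^ bV := Real.rpow_nonneg (by linarith) _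
        linarith
      · rw [max_eq_left hc]
        have : (0:ℝ) ≤ τ ^ bV := Real.rpow_nonneg hτ0.le _
        linarith
    have e4 : s ^ bV ≤ 2 ^ bV * ((s - τ) ^ bV + τ ^ bV) := by
      rw [e2] at e1
      have := mul_le_mul_of_nonneg_left e3 h2b.le
      linarith
    have e5 := mul_le_mul_of_nonneg_left e4 hε0.le
    have hexp : ε * (2 ^ bV * ((s - τ) ^ bV + τ ^ bV))
        = ee * (s - τ) ^ bV + ε * 2 ^ bV * τ ^ bV := by rw [heedef]; ring
    have hDfx : Df τ = 2 * C0 + ε * τ ^ bV + ε * 2 ^ bV * τ ^ bV := by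
      simp only [hDfdef]; ring
    rw [hexp] at e5
    linarith
  set Lf : ℝ → ℝ := fun τ => 8 * Df τ + 1 with hLfdef
  clear_value Lf
  by_contra hcon
  push_neg at hcon
  obtain ⟨hnot1, hnot2⟩ := hcon
  -- integrands
  set g₁ : ℝ → ℝ := fun u => (if 0 ≤ X₁ u then cplus else -cminus) * |X₁ u| ^ α with hg₁def
  set g₂ : ℝ → ℝ := fun u => (if 0 ≤ X₂ u then cplus else -cminus) * |X₂ u| ^ α with hg₂def
  clear_value g₁ g₂
  have hg₁m : Measurable g₁ := by
    rw [hg₁def]; exact my_measg α cplus cminus hα0 hα1 X₁ hX₁meas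
  have hg₂m : Measurable g₂ := by
    rw [hg₂def]; exact my_measg α cplus cminus hα0 hα1 X₂ hX₂meas
  have hg₁loc : ∀ T, ∃ M, ∀ s ∈ Icc (0:ℝ) T, |g₁ s| ≤ M := by
    rw [hg₁def]; exact my_locg α cplus cminus hα0 hα1 hcp hcm X₁ hX₁loc
  have hg₂loc : ∀ T, ∃ M, ∀ s ∈ Icc (0:ℝ) T, |g₂ s| ≤ M := by
    rw [hg₂def]; exact my_locg α cplus cminus hα0 hα1 hcp hcm X₂ hX₂loc
  have hint1 : ∀ p q : ℝ, 0 ≤ p → 0 ≤ q → IntervalIntegrable g₁ volume p q :=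
    fun p q hp hq => my_intInt g₁ hg₁m hg₁loc hp hq
  have hint2 : ∀ p q : ℝ, 0 ≤ p → 0 ≤ q → IntervalIntegrable g₂ volume p q :=
    fun p q hp hq => my_intInt g₂ hg₂m hg₂loc hp hq
  have heqd1 : ∀ τ s : ℝ, 0 ≤ τ → τ ≤ s →
      X₁ s = X₁ τ + (∫ u in τ..s, g₁ u) + (B s - B τ) := by
    intro τ s hτ hs
    have e1 := hX₁eq s (by linarith)
    have e2 := hX₁eq τ hτ
    have hsplit := integral_add_adjacent_intervals (hint1 0 τ le_rfl hτ)
      (hint1 τ s hτ (by linarith))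
    linarith
  have heqd2 : ∀ τ s : ℝ, 0 ≤ τ → τ ≤ s →
      X₂ s = X₂ τ + (∫ u in τ..s, g₂ u) + (B s - B τ) := by
    intro τ s hτ hs
    have e1 := hX₂eq s (by linarith)
    have e2 := hX₂eq τ hτ
    have hsplit := integral_add_adjacent_intervals (hint2 0 τ le_rfl hτ)
      (hint2 τ s hτ (by linarith))
    linarith
  -- hover bounds
  have hover₂ : ∀ τ, T0 ≤ τ → X₂ τ < Lf τ := by
    intro τ hτ
    by_contra hcontra
    push_neg at hcontra
    have hτ0 : (0:ℝ) ≤ τ := by linarith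
    have heqd2' : ∀ s, τ ≤ s → X₂ s = X₂ τ
        + (∫ u in τ..s, (if 0 ≤ X₂ u then cplus else -cminus) * |X₂ u| ^ α)
        + (B s - B τ) := by
      intro s hs
      have hthis := heqd2 τ s hτ0 hs
      simp only [hg₂def] at hthis
      linarith
    have heeP2 : ee ≤ (cplus * (2:ℝ) ^ (-α) / (1 / (1 - α))) ^ (1 / (1 - α)) / 4 := by
      rw [← hbV]
      exact heeP cplus hcp (by rw [hcmn]; exact min_le_left _ _)
    have hnoise2 : ∀ s, τ ≤ s → |B s - B τ| ≤ Df τ + ee * (s - τ) ^ (1 / (1 - α)) := by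
      rw [← hbV]
      exact hnoise τ hτ
    refine hnot2 (my_escape α cplus cminus ⟨hα0, hα1⟩ hcp hcm τ hτ0 X₂
      (fun s => B s - B τ) hX₂meas hX₂loc
      heqd2' (Df τ) ee (hDf0 τ hτ) hee0 heeP2 hnoise2 ?_)
    simp only [hLfdef] at hcontra
    linarith
  have hover₁ : ∀ τ, T0 ≤ τ → -Lf τ < X₁ τ := by
    intro τ hτ
    by_contra hcontra
    push_neg at hcontra
    refine hnot1 ?_
    rw [← tendsto_neg_atTop_iff]
    have hflip : ∀ v : ℝ, (if 0 ≤ -v then cminus else -cplus) * |(-v)| ^ α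
        = -((if 0 ≤ v then cplus else -cminus) * |v| ^ α) := by
      intro v
      rcases lt_trichotomy v 0 with hv | hv | hv
      · rw [if_pos (by linarith), if_neg (not_le.2 hv), abs_neg]; ring
      · subst hv
        simp [Real.zero_rpow (ne_of_gt hα0)]
      · rw [if_neg (not_le.2 (by linarith : -v < 0)), if_pos hv.le, abs_neg]; ring
    have heq' : ∀ s, τ ≤ s → (fun s => -X₁ s) s = (fun s => -X₁ s) τ
        + (∫ u in τ..s, (if 0 ≤ -X₁ u then cminus else -cplus) * |(-X₁ u)| ^ α)
        + (-(B s - B τ)) := by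
      intro s hs
      have hmain := heqd1 τ s (by linarith) hs
      have hci : (∫ u in τ..s, (if 0 ≤ -X₁ u then cminus else -cplus) * |(-X₁ u)| ^ α)
          = ∫ u in τ..s, -(g₁ u) :=
        intervalIntegral.integral_congr (fun u _ => by
          simp only [hg₁def]; exact hflip (X₁ u))
      rw [hci, intervalIntegral.integral_neg]
      simp only
      linarith
    refine my_escape α cminus cplus ⟨hα0, hα1⟩ hcm hcp τ (by linarith)
      (fun s => -X₁ s) (fun s => -(B s - B τ)) hX₁meas.neg
      (fun T => (hX₁loc T).imp (fun M hM s hs => by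
        rw [show |-X₁ s| = |X₁ s| from abs_neg _]; exact hM s hs))
      heq' (Df τ) ee (hDf0 τ hτ) hee0
      (by
        rw [← hbV]
        exact heeP cminus hcm (by rw [hcmn]; exact min_le_right _ _))
      (fun s hs => by
        rw [show |-(B s - B τ)| = |B s - B τ| from abs_neg _]
        have hnoise2 : ∀ s', τ ≤ s' → |B s' - B τ| ≤ Df τ + ee * (s' - τ) ^ (1 / (1 - α)) := by
          rw [← hbV]
          exact hnoise τ hτ
        exact hnoise2 s hs) ?_
    simp only [hLfdef] at hcontra
    show (8:ℝ) * Df τ + 1 ≤ -X₁ τ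
    linarith
  -- order preservation
  have contW : ∀ p q : ℝ, 0 ≤ p → ContinuousOn (fun s => X₂ s - X₁ s) (Icc p q) := by
    intro p q hp
    have c1 := my_contPrim g₁ hg₁m hg₁loc 0 le_rfl (p := p) (q := q) hp
    have c2 := my_contPrim g₂ hg₂m hg₂loc 0 le_rfl (p := p) (q := q) hp
    refine ContinuousOn.congr
      (f := fun s => (x₂ - x₁) + ((∫ u in (0:ℝ)..s, g₂ u) - ∫ u in (0:ℝ)..s, g₁ u))
      (continuousOn_const.add (c2.sub c1)) ?_
    intro s hs
    have e1 := hX₁eq s (hp.trans hs.1)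
    have e2 := hX₂eq s (hp.trans hs.1)
    simp only
    linarith
  have step0 : ∀ q : ℝ, 0 ≤ q → (∀ r, 0 ≤ r → r < q → (fun _ => (0:ℝ)) r ≤ X₂ r - X₁ r) →
      (fun _ => (0:ℝ)) q + (x₂ - x₁) ≤ X₂ q - X₁ q := by
    intro q hq hbel
    have hae : g₁ ≤ᵐ[volume.restrict (Icc (0:ℝ) q)] g₂ := by
      have h1 : ∀ᵐ s ∂(volume.restrict (Icc (0:ℝ) q)), s ∈ Icc (0:ℝ) q :=
        ae_restrict_mem measurableSet_Icc
      have h2 : ∀ᵐ s : ℝ, s ≠ q := by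
        rw [ae_iff]
        have : {a : ℝ | ¬a ≠ q} = {q} := by ext a; simp
        rw [this]
        exact measure_singleton _
      filter_upwards [h1, ae_restrict_of_ae h2] with s hs hne
      have hgap := hbel s hs.1 (lt_of_le_of_ne hs.2 hne)
      simp only at hgap
      set M : ℝ := |X₁ s| + |X₂ s| + 1 with hMdef
      have hM0 : 0 < M := by positivity
      have hMa : -M ≤ X₁ s := by
        have := neg_abs_le (X₁ s)
        have := abs_nonneg (X₂ s)
        simp only [hMdef]; linarith
      have hMb : X₂ s ≤ M := by
        have := le_abs_self (X₂ s)
        have := abs_nonneg (X₁ s)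
        simp only [hMdef]; linarith
      have gain := my_gain α cplus cminus ⟨hα0, hα1⟩ hcp hcm M (X₁ s) (X₂ s)
        hM0 hMa (by linarith) hMb
      have hpr : 0 ≤ min cplus cminus * min α 2⁻¹ * ((X₂ s - X₁ s) * M ^ (α - 1)) := by
        have hMp : (0:ℝ) < M ^ (α - 1) := Real.rpow_pos_of_pos hM0 _
        have := lt_min hα0 (by norm_num : (0:ℝ) < 2⁻¹)
        positivity
      simp only [hg₁def, hg₂def]
      linarith
    have hmono := intervalIntegral.integral_mono_ae_restrict hq
      (hint1 0 q le_rfl hq) (hint2 0 q le_rfl hq) hae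
    have e1 := hX₁eq q hq
    have e2 := hX₂eq q hq
    simp only
    linarith
  have horder0 : ∀ s : ℝ, 0 ≤ s → 0 ≤ X₂ s - X₁ s := by
    intro s hs
    have := my_FC 0 (x₂ - x₁) (by linarith) (fun s => X₂ s - X₁ s) (fun _ => 0)
      (fun q _ => contW 0 q le_rfl) (fun q _ => continuousOn_const) step0 s hs
    simpa using this
  have horder : ∀ s : ℝ, 0 ≤ s → x₂ - x₁ ≤ X₂ s - X₁ s := by
    intro s hs
    have := step0 s hs (fun r h1 _ => by simpa using horder0 r h1)
    simpa using this

  -- Gronwall exponent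
  set κ : ℝ := kk * (2 * C2 * ε) ^ (α - 1) with hκdef
  have h2CE0 : (0:ℝ) < 2 * C2 * ε := by positivity
  have h2CEr0 : 2 * C2 * ε ≤ r0 := by
    have h1 : ε ≤ r0 / (2 * C2) := by rw [hεdef]; exact min_le_right _ _
    have h2 := mul_le_mul_of_nonneg_left h1 (by positivity : (0:ℝ) ≤ 2 * C2)
    calc 2 * C2 * ε ≤ 2 * C2 * (r0 / (2 * C2)) := h2
      _ = r0 := by field_simp
  have hr0pow : r0 ^ (α - 1) = (bV + 1) / kk := by
    rw [hr0, ← Real.rpow_mul hbk0.le]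
    rw [one_div, inv_mul_cancel₀ (ne_of_lt (by linarith : α - 1 < 0))]
    exact Real.rpow_one _
  have hmono' : r0 ^ (α - 1) ≤ (2 * C2 * ε) ^ (α - 1) :=
    Real.rpow_le_rpow_of_nonpos h2CE0 h2CEr0 (by linarith)
  have hκfin : bV + 1 ≤ κ := by
    have h1 : kk * r0 ^ (α - 1) ≤ kk * (2 * C2 * ε) ^ (α - 1) :=
      mul_le_mul_of_nonneg_left hmono' hkk0.le
    rw [hr0pow] at h1
    have heq2 : kk * ((bV + 1) / kk) = bV + 1 := by field_simp
    rw [hκdef]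
    linarith
  have hκ0 : 0 < κ := by linarith
  clear_value κ
  set C1 : ℝ := 16 * C0 + 1 with hC1
  have hC10 : 0 < C1 := by rw [hC1]; linarith
  have hLfeq : ∀ τ : ℝ, Lf τ = C1 + C2 * ε * τ ^ bV := by
    intro τ; simp only [hLfdef, hDfdef, hC1, hC2]; ring
  set T1 : ℝ := max (max T0 1) ((C1 / (C2 * ε)) ^ (1 / bV)) with hT1def
  have hT1T0 : T0 ≤ T1 := le_trans (le_max_left _ _) (le_max_left _ _)
  have hT11 : (1:ℝ) ≤ T1 := le_trans (le_max_right T0 1) (le_max_left _ _)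
  have hT1ub : (C1 / (C2 * ε)) ^ (1 / bV) ≤ T1 := le_max_right _ _
  clear_value T1
  have hT10 : (0:ℝ) < T1 := by linarith
  have hLb : ∀ s, T1 ≤ s → Lf s ≤ 2 * C2 * ε * s ^ bV := by
    intro s hs
    have hs0 : (0:ℝ) < s := by linarith
    have h1 : (C1 / (C2 * ε)) ^ (1 / bV) ≤ s := le_trans hT1ub hs
    have hbase0 : (0:ℝ) ≤ C1 / (C2 * ε) := by positivity
    have h2 : ((C1 / (C2 * ε)) ^ (1 / bV)) ^ bV ≤ s ^ bV :=
      Real.rpow_le_rpow (Real.rpow_nonneg hbase0 _) h1 hbV0.le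
    rw [← Real.rpow_mul hbase0, one_div, inv_mul_cancel₀ (ne_of_gt hbV0),
      Real.rpow_one] at h2
    rw [div_le_iff₀ (by positivity)] at h2
    rw [hLfeq s]
    linarith only [h2]
  have hLpos : ∀ τ, T0 ≤ τ → 0 < Lf τ := by
    intro τ hτ
    have := hDf0 τ hτ
    simp only [hLfdef]
    linarith
  set d : ℝ := x₂ - x₁ with hddef
  have hd0 : 0 < d := by rw [hddef]; linarith
  clear_value d
  set Z : ℝ → ℝ := fun s => d / 2 * (s / T1) ^ κ with hZdef
  clear_value Z
  have hZc : Continuous Z := by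
    rw [hZdef]
    exact continuous_const.mul
      (Continuous.rpow_const (continuous_id.div_const T1) (fun x => Or.inr hκ0.le))
  have stepZ : ∀ q, T1 ≤ q → (∀ r, T1 ≤ r → r < q → Z r ≤ X₂ r - X₁ r) →
      Z q + d / 2 ≤ X₂ q - X₁ q := by
    intro q hq hbel
    have hT1nn : (0:ℝ) ≤ T1 := hT10.le
    have hq0 : (0:ℝ) ≤ q := by linarith
    have hptw : ∀ s, T1 ≤ s → s < q → κ * Z s / s ≤ g₂ s - g₁ s := by
      intro s hs1 hs2
      have hs0 : (0:ℝ) < s := by linarith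
      have hsT0 : T0 ≤ s := by linarith
      have h2s := hover₂ s hsT0
      have h1s := hover₁ s hsT0
      have hLp := hLpos s hsT0
      have hordnn := horder0 s (by linarith : (0:ℝ) ≤ s)
      have gain := my_gain α cplus cminus ⟨hα0, hα1⟩ hcp hcm (Lf s) (X₁ s) (X₂ s)
        hLp (by linarith) (by linarith) (by linarith)
      have hZs0 : 0 ≤ Z s := by
        simp only [hZdef]
        exact mul_nonneg (by linarith)
          (Real.rpow_nonneg (div_nonneg hs0.le hT10.le) _)
      have hZgap : Z s ≤ X₂ s - X₁ s := hbel s hs1 hs2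
      have hA : (2 * C2 * ε * s ^ bV) ^ (α - 1) ≤ (Lf s) ^ (α - 1) :=
        Real.rpow_le_rpow_of_nonpos hLp (hLb s hs1) (by linarith)
      have hsbv0 : 0 < s ^ bV := Real.rpow_pos_of_pos hs0 _
      have hsplitA : (2 * C2 * ε * s ^ bV) ^ (α - 1) = (2 * C2 * ε) ^ (α - 1) * s⁻¹ := by
        rw [Real.mul_rpow h2CE0.le hsbv0.le, ← Real.rpow_mul hs0.le]
        have hbexp : bV * (α - 1) = -1 := by rw [hbV]; field_simp; ring
        rw [hbexp, Real.rpow_neg_one]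
      have hAA : (0:ℝ) < (2 * C2 * ε) ^ (α - 1) * s⁻¹ := by
        have := Real.rpow_pos_of_pos h2CE0 (α - 1)
        positivity
      have hprod : Z s * ((2 * C2 * ε) ^ (α - 1) * s⁻¹) ≤ (X₂ s - X₁ s) * (Lf s) ^ (α - 1) := by
        refine mul_le_mul hZgap ?_ hAA.le (by linarith)
        rw [← hsplitA]; exact hA
      have hkkeq : κ * Z s / s = kk * (Z s * ((2 * C2 * ε) ^ (α - 1) * s⁻¹)) := by
        rw [hκdef]; field_simp
      have gain2 := mul_le_mul_of_nonneg_left hprod hkk0.le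
      have gain3 : kk * ((X₂ s - X₁ s) * (Lf s) ^ (α - 1)) ≤ g₂ s - g₁ s := by
        have hexpand : kk * ((X₂ s - X₁ s) * (Lf s) ^ (α - 1))
            = min cplus cminus * min α 2⁻¹ * ((X₂ s - X₁ s) * (Lf s) ^ (α - 1)) := by
          rw [hkkdef, hcmn]
        rw [hexpand]
        simp only [hg₁def, hg₂def]
        exact gain
      rw [hkkeq]
      linarith
    have hintgd : IntervalIntegrable (fun s => g₂ s - g₁ s) volume T1 q :=
      (hint2 T1 q hT1nn hq0).sub (hint1 T1 q hT1nn hq0)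
    have hintZ : IntervalIntegrable (fun s => κ * Z s / s) volume T1 q := by
      refine ContinuousOn.intervalIntegrable ?_
      have huicc : ∀ s ∈ uIcc T1 q, s ≠ 0 := by
        intro s hsm
        rw [uIcc_of_le hq] at hsm
        have := hsm.1
        intro h0
        rw [h0] at this
        linarith
      exact ContinuousOn.div (continuousOn_const.mul hZc.continuousOn)
        continuousOn_id huicc
    have hae2 : (fun s => κ * Z s / s) ≤ᵐ[volume.restrict (Icc T1 q)]
        (fun s => g₂ s - g₁ s) := by
      have h1 : ∀ᵐ s ∂(volume.restrict (Icc T1 q)), s ∈ Icc T1 q :=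
        ae_restrict_mem measurableSet_Icc
      have h2 : ∀ᵐ s : ℝ, s ≠ q := by
        rw [ae_iff]
        have he : {a : ℝ | ¬a ≠ q} = {q} := by ext a; simp
        rw [he]
        exact measure_singleton _
      filter_upwards [h1, ae_restrict_of_ae h2] with s hs hne
      exact hptw s hs.1 (lt_of_le_of_ne hs.2 hne)
    have hmono := intervalIntegral.integral_mono_ae_restrict hq hintZ hintgd hae2
    have hftcZ := my_ftcZ T1 (d / 2) κ q hT10 (by linarith) hκ0 hq
    simp only [hZdef] at hmono
    rw [hftcZ] at hmono
    have hintsub : (∫ s in T1..q, (g₂ s - g₁ s))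
        = (∫ s in T1..q, g₂ s) - ∫ s in T1..q, g₁ s :=
      intervalIntegral.integral_sub (hint2 T1 q hT1nn hq0) (hint1 T1 q hT1nn hq0)
    have e1 := heqd1 T1 q hT1nn hq
    have e2 := heqd2 T1 q hT1nn hq
    have hbase := horder T1 hT1nn
    have hZq : Z q = d / 2 * (q / T1) ^ κ := by simp only [hZdef]
    rw [hintsub] at hmono
    linarith [hZq, hbase, e1, e2, hmono]
  have hZfinal := my_FC T1 (d / 2) (by linarith) (fun s => X₂ s - X₁ s) Z
    (fun q _ => contW T1 q hT10.le) (fun q _ => hZc.continuousOn) stepZ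
  set s0 : ℝ := max T1 (8 * C2 * ε * T1 ^ κ / d + 1) with hs0def
  have hs0T1 : T1 ≤ s0 := le_max_left _ _
  have hs01 : (1:ℝ) ≤ s0 := by linarith
  have hs00 : (0:ℝ) < s0 := by linarith
  have hs0big : 8 * C2 * ε * T1 ^ κ / d ≤ s0 := by
    have := le_max_right T1 (8 * C2 * ε * T1 ^ κ / d + 1)
    linarith
  clear_value s0
  have h1 := hZfinal s0 hs0T1
  have h1' : Z s0 ≤ X₂ s0 - X₁ s0 := h1
  have h2 : X₂ s0 - X₁ s0 < 2 * Lf s0 := by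
    have ha := hover₂ s0 (by linarith)
    have hb := hover₁ s0 (by linarith)
    linarith
  exact my_contra C2 ε bV κ T1 d s0 (Z s0) (X₂ s0 - X₁ s0) (Lf s0)
    hC20 hε0 hbV0 hd0 hT10 hs0T1 hs01 hκfin hs0big (by simp only [hZdef])
    h1' h2 (hLb s0 hs0T1)
end

section
/- Let α ∈ (0,1) and c₊, c₋ > 0. Every continuous function y : [0,∞) → ℝ satisfying y(t) = ∫₀ᵗ (c₊·1_{y(s)≥0} − c₋·1_{y(s)<0})|y(s)|^α ds for all t ≥ 0 satisfies −(c₋(1−α)t)^{1/(1−α)} ≤ y(t) ≤ (c₊(1−α)t)^{1/(1−α)} for all t ≥ 0. -/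
/-!
For `ε > 0` the function `B(t) = (1 + ε) X⁺(t + ε)` is a strict supersolution: `B(0) > 0 = y(0)`
and `B' = (1 + ε) c₊ (X⁺)^α > c₊ B^α` because `(1 + ε)^α < 1 + ε`. Since the drift is continuous
for `α > 0`, `y` is differentiable with `y' = a(y)`, and `a(z) = c₊ z^α` for `z ≥ 0`, so `y` can
never reach `B` from below; letting `ε → 0` gives `y ≤ X⁺`. The lower bound is the upper bound
for `-y`, which solves the equation with `c₊` and `c₋` exchanged.
-/

open Set intervalIntegral

theorem hasDerivWithinAt_Ici_of_eq_integral {y g : ℝ → ℝ} {a t : ℝ}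
    (hg : ContinuousOn g (Ici a)) (hyeq : ∀ t, a ≤ t → y t = ∫ s in a..t, g s) (ht : a ≤ t) :
    HasDerivWithinAt y (g t) (Ici t) t := by
  have hint : IntervalIntegrable g MeasureTheory.volume a t :=
    (hg.mono fun s hs => by rw [uIcc_of_le ht] at hs; exact hs.1).intervalIntegrable
  have hIoi : Ioi t ⊆ Ici a := fun s hs => ht.trans (le_of_lt hs)
  exact (integral_hasDerivWithinAt_right hint
    ((hg.mono hIoi).stronglyMeasurableAtFilter_nhdsWithin measurableSet_Ioi t)
    ((hg t ht).mono hIoi)).congr (fun s hs => hyeq s (ht.trans hs)) (hyeq t ht)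

noncomputable def drift (cplus cminus α z : ℝ) : ℝ :=
  (if 0 ≤ z then cplus else -cminus) * |z| ^ α

section Drift

variable {cplus cminus α : ℝ}

theorem continuous_drift (hα : 0 < α) : Continuous (drift cplus cminus α) := by
  have hpow : Continuous fun z : ℝ => |z| ^ α :=
    (Real.continuous_rpow_const hα.le).comp continuous_abs
  have hite : drift cplus cminus α =
      fun z => if 0 ≤ z then cplus * |z| ^ α else -cminus * |z| ^ α :=
    funext fun z => ite_mul ..
  rw [hite]
  refine Continuous.if_le (continuous_const.mul hpow) (continuous_const.mul hpow)
    continuous_const continuous_id fun z hz => ?_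
  simp [← hz, Real.zero_rpow hα.ne']

theorem drift_of_nonneg {z : ℝ} (hz : 0 ≤ z) : drift cplus cminus α z = cplus * z ^ α := by
  simp [drift, hz, abs_of_nonneg hz]

theorem drift_neg (hα : α ≠ 0) (z : ℝ) : drift cplus cminus α (-z) = -drift cminus cplus α z := by
  rcases lt_trichotomy z 0 with hz | rfl | hz
  · simp [drift, hz.le, not_le.2 hz, abs_neg]
  · simp [drift, Real.zero_rpow hα]
  · simp [drift, hz.le, not_le.2 (neg_neg_of_pos hz), abs_neg]

end Drift

noncomputable def maxSolution (c α t : ℝ) : ℝ := (c * (1 - α) * t) ^ (1 / (1 - α))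

theorem continuous_maxSolution {c α : ℝ} (hα : α < 1) : Continuous (maxSolution c α) :=
  (Real.continuous_rpow_const (one_div_pos.2 (sub_pos.2 hα)).le).comp
    (continuous_const.mul continuous_id)

theorem hasDerivAt_maxSolution {c α t : ℝ} (hα : α ≠ 1) (ht : 0 < c * (1 - α) * t) :
    HasDerivAt (maxSolution c α) (c * maxSolution c α t ^ α) t := by
  have h1α : 1 - α ≠ 0 := sub_ne_zero.2 hα.symm
  have h := ((hasDerivAt_id t).const_mul (c * (1 - α))).rpow_const (p := 1 / (1 - α))
    (Or.inl ht.ne')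
  simp only [id, mul_one] at h
  refine h.congr_deriv ?_
  have hcoef : c * (1 - α) * (1 / (1 - α)) = c := by field_simp
  have hexp : 1 / (1 - α) - 1 = 1 / (1 - α) * α := by field_simp; ring
  rw [hcoef, hexp, Real.rpow_mul ht.le]
  rfl

section Comparison

variable {cplus cminus α : ℝ} {y : ℝ → ℝ}

theorem le_mul_maxSolution_add (hα0 : 0 < α) (hα1 : α < 1) (hcp : 0 < cplus)
    (hycont : ContinuousOn y (Ici 0))
    (hyeq : ∀ t, 0 ≤ t → y t = ∫ s in (0:ℝ)..t, drift cplus cminus α (y s))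
    {t ε : ℝ} (ht : 0 ≤ t) (hε : 0 < ε) :
    y t ≤ (1 + ε) * maxSolution cplus α (t + ε) := by
  have h1α : 0 < 1 - α := sub_pos.2 hα1
  have hX_pos : ∀ s, 0 ≤ s → 0 < maxSolution cplus α (s + ε) := fun s hs =>
    Real.rpow_pos_of_pos (by positivity) _
  have hy' : ∀ s ∈ Ico 0 t, HasDerivWithinAt y (drift cplus cminus α (y s)) (Ici s) s :=
    fun s hs => hasDerivWithinAt_Ici_of_eq_integral
      ((continuous_drift hα0).comp_continuousOn hycont) hyeq hs.1
  have hB' : ∀ s ∈ Ico 0 t, HasDerivWithinAt (fun s => (1 + ε) * maxSolution cplus α (s + ε))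
      ((1 + ε) * (cplus * maxSolution cplus α (s + ε) ^ α)) (Ici s) s := fun s hs =>
    (((hasDerivAt_maxSolution hα1.ne
      (mul_pos (mul_pos hcp h1α) (by linarith [hs.1]))).comp_add_const s ε).const_mul
      (1 + ε)).hasDerivWithinAt
  have hB : ContinuousOn (fun s => (1 + ε) * maxSolution cplus α (s + ε)) (Icc 0 t) :=
    (continuous_const.mul
      ((continuous_maxSolution hα1).comp (continuous_add_const ε))).continuousOn
  refine image_le_of_deriv_right_lt_deriv_boundary' (hycont.mono Icc_subset_Ici_self) hy' ?_
    hB hB' (fun s hs hys => ?_) ⟨ht, le_rfl⟩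
  · rw [hyeq 0 le_rfl, integral_same]
    exact mul_nonneg (by positivity) (hX_pos 0 le_rfl).le
  · have hX := hX_pos s hs.1
    have hpow : (1 + ε) ^ α < 1 + ε := Real.rpow_lt_self_of_one_lt (by linarith) hα1
    have hrhs : 0 < cplus * maxSolution cplus α (s + ε) ^ α :=
      mul_pos hcp (Real.rpow_pos_of_pos hX α)
    rw [hys, drift_of_nonneg (by positivity), Real.mul_rpow (by positivity) hX.le]
    nlinarith

theorem le_maxSolution (hα0 : 0 < α) (hα1 : α < 1) (hcp : 0 < cplus)
    (hycont : ContinuousOn y (Ici 0))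
    (hyeq : ∀ t, 0 ≤ t → y t = ∫ s in (0:ℝ)..t, drift cplus cminus α (y s))
    {t : ℝ} (ht : 0 ≤ t) : y t ≤ maxSolution cplus α t := by
  have hB : ContinuousWithinAt (fun ε => (1 + ε) * maxSolution cplus α (t + ε)) (Ioi 0) 0 :=
    ((continuous_const.add continuous_id).mul
      ((continuous_maxSolution hα1).comp (continuous_const.add continuous_id))).continuousWithinAt
  have h0 : (0:ℝ) ∈ closure (Ioi 0) := by simp
  simpa using continuousWithinAt_const.closure_le h0 hB fun ε (hε : 0 < ε) =>
    le_mul_maxSolution_add hα0 hα1 hcp hycont hyeq ht hε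

theorem neg_eq_integral_drift (hα : α ≠ 0)
    (hyeq : ∀ t, 0 ≤ t → y t = ∫ s in (0:ℝ)..t, drift cplus cminus α (y s)) {t : ℝ}
    (ht : 0 ≤ t) : -y t = ∫ s in (0:ℝ)..t, drift cminus cplus α (-y s) := by
  simp only [hyeq t ht, drift_neg hα, integral_neg]

end Comparison

/-- Any continuous solution of `y(t) = ∫₀ᵗ (c₊·1_{y≥0} − c₋·1_{y<0})|y(s)|^α ds`,
`α ∈ (0,1)`, lies between the minimal solution `−(c₋(1−α)t)^{1/(1−α)}` and the
maximal solution `(c₊(1−α)t)^{1/(1−α)}`. -/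
theorem stmt18 (α cplus cminus : ℝ) (hα : α ∈ Set.Ioo (0:ℝ) 1)
    (hcp : 0 < cplus) (hcm : 0 < cminus)
    (y : ℝ → ℝ) (hycont : ContinuousOn y (Set.Ici (0:ℝ)))
    (hyeq : ∀ t : ℝ, 0 ≤ t →
      y t = ∫ s in (0:ℝ)..t, (if 0 ≤ y s then cplus else -cminus) * |y s| ^ α) :
    ∀ t : ℝ, 0 ≤ t →
      -((cminus * (1 - α) * t) ^ (1 / (1 - α))) ≤ y t ∧
      y t ≤ (cplus * (1 - α) * t) ^ (1 / (1 - α)) := by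
  intro t ht
  have hlower : -y t ≤ maxSolution cminus α t :=
    le_maxSolution hα.1 hα.2 hcm hycont.neg
      (fun s hs => neg_eq_integral_drift hα.1.ne' hyeq hs) ht
  exact ⟨neg_le.mpr hlower, le_maxSolution hα.1 hα.2 hcp hycont hyeq ht⟩
end
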